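/- arXiv:2208.10163 — 4 statements merged into one kernel-verified Lean document; each statement's English description precedes it below -/
import Mathlib

section
/- If T ⊥ (Y(t), S(t)) | X, G=1 (internal validity), G ⊥ (Y(0),Y(1),S(0),S(1)) | X (conditional external validity), and T ⊥ Y(t) | X, S(t), G=0 (latent unconfoundedness) for t ∈ {0,1}, then the mean exchangeability condition E[Y(t) | X, S(t), T=t, G=1] = E[Y(t) | X, S(t), T=t, G=0] holds for t ∈ {0,1}. -/
open MeasureTheory ProbabilityTheory Filter Set

/-- `h : β → ℝ` is (a version of) the conditional mean of `Y` given `Z` under the measure `P`,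
i.e. `h (Z ω) = E_P[Y | Z] (ω)`, characterized by the defining integral property. -/
def IsCondMean {Ω β : Type*} [MeasurableSpace Ω] [MeasurableSpace β]
    (P : Measure Ω) (Z : Ω → β) (Y : Ω → ℝ) (h : β → ℝ) : Prop :=
  ∀ B : Set β, MeasurableSet B →
    ∫ ω in Z ⁻¹' B, Y ω ∂P = ∫ ω in Z ⁻¹' B, h (Z ω) ∂P



/-- Doob–Dynkin factorization for real-valued functions. -/
lemma exists_factor {Ω γ : Type*} {mγ : MeasurableSpace γ} (Z : Ω → γ)
    (k : Ω → ℝ) (hk : Measurable[mγ.comap Z] k) :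
    ∃ h : γ → ℝ, Measurable h ∧ ∀ ω, h (Z ω) = k ω := by
  classical
  letI m' : MeasurableSpace Ω := mγ.comap Z
  have sm : StronglyMeasurable[m'] k := hk.stronglyMeasurable
  have key : ∀ s : @SimpleFunc Ω m' ℝ, ∃ g : γ → ℝ, Measurable g ∧ ∀ ω, g (Z ω) = s ω := by
    intro s
    have hfib : ∀ c : ℝ, ∃ B : Set γ, MeasurableSet B ∧ Z ⁻¹' B = s ⁻¹' {c} :=
      fun c => s.measurableSet_fiber c
    choose B hBmeas hBpre using hfib
    refine ⟨fun z => ∑ c ∈ s.range, c * (B c).indicator (fun _ => (1:ℝ)) z, ?_, ?_⟩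
    · exact Finset.measurable_sum _ fun c _ =>
        (measurable_const.indicator (hBmeas c)).const_mul c
    · intro ω
      have hind : ∀ c : ℝ, (B c).indicator (fun _ => (1:ℝ)) (Z ω)
          = if s ω = c then 1 else 0 := by
        intro c
        by_cases h : Z ω ∈ B c
        · have h2 : ω ∈ s ⁻¹' {c} := by rw [← hBpre c]; exact h
          simp only [Set.indicator_of_mem h]
          simp only [Set.mem_preimage, Set.mem_singleton_iff] at h2
          simp [h2]
        · have h2 : ω ∉ s ⁻¹' {c} := by rw [← hBpre c]; exact h
          simp only [Set.indicator_of_notMem h]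
          simp only [Set.mem_preimage, Set.mem_singleton_iff] at h2
          simp [h2]
      show (∑ c ∈ s.range, c * (B c).indicator (fun _ => (1:ℝ)) (Z ω)) = s ω
      rw [Finset.sum_congr rfl fun c _ => by rw [hind c]]
      rw [Finset.sum_eq_single_of_mem (s ω) (s.mem_range_self ω)]
      · simp
      · intro b _ hb
        simp [Ne.symm hb]
  choose g hgmeas hgZ using fun n => key (sm.approx n)
  set D : Set γ := {z | ∃ L, Tendsto (fun n => g n z) atTop (nhds L)} with hD_def
  have hD : MeasurableSet D := measurableSet_exists_tendsto hgmeas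
  set g' : ℕ → γ → ℝ := fun n => D.indicator (g n) with hg'_def
  have hg' : ∀ n, Measurable (g' n) := fun n => (hgmeas n).indicator hD
  have hconv : ∀ z, ∃ L, Tendsto (fun n => g' n z) atTop (nhds L) := by
    intro z
    by_cases hz : z ∈ D
    · have hz' := hz
      obtain ⟨L, hL⟩ := hz'
      refine ⟨L, ?_⟩
      simpa only [hg'_def, Set.indicator_of_mem hz] using hL
    · refine ⟨0, ?_⟩
      simp only [hg'_def, Set.indicator_of_notMem hz]
      exact tendsto_const_nhds
  set h : γ → ℝ := fun z => limUnder atTop (fun n => g' n z) with hh_def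
  have hTend : ∀ z, Tendsto (fun n => g' n z) atTop (nhds (h z)) :=
    fun z => tendsto_nhds_limUnder (hconv z)
  have hmeas : Measurable h :=
    measurable_of_tendsto_metrizable hg' (tendsto_pi_nhds.2 hTend)
  refine ⟨h, hmeas, fun ω => ?_⟩
  have happ : Tendsto (fun n => g n (Z ω)) atTop (nhds (k ω)) := by
    have := sm.tendsto_approx ω
    simpa only [hgZ] using this
  have hzD : Z ω ∈ D := ⟨k ω, happ⟩
  have : Tendsto (fun n => g' n (Z ω)) atTop (nhds (k ω)) := by
    simpa only [hg'_def, Set.indicator_of_mem hzD] using happ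
  exact tendsto_nhds_unique (hTend (Z ω)) this

/-- Key lemma: if `W ⊥ U | m` and `K` is (a version of) the conditional mean of `V` given `m'`
(`m ≤ m' ≤ m ⊔ σ(U)`, `V` being `σ(U)`-measurable), then the conditional-mean property persists
after further conditioning on `{W = wv}`. -/
lemma key_lemma {Ω γ : Type*} {mγ : MeasurableSpace γ} (m m' : MeasurableSpace Ω)
    [mΩ : MeasurableSpace Ω] [StandardBorelSpace Ω] [Nonempty Ω]
    (μ : Measure Ω) [IsProbabilityMeasure μ]
    (hm : m ≤ mΩ)
    (W : Ω → ℝ) (hW : Measurable W) (wv : ℝ)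
    (U : Ω → γ) (hU : Measurable U)
    (hCI : CondIndepFun m hm W U μ)
    (hm'₁ : m ≤ m') (hm'₂ : m' ≤ m ⊔ mγ.comap U)
    (V K : Ω → ℝ) (hVint : Integrable V μ) (hV : Measurable[mγ.comap U] V)
    (hKint : Integrable K μ) (hK : Measurable[m'] K)
    (hKmean : ∀ C, MeasurableSet[m'] C → ∫ ω in C, V ω ∂μ = ∫ ω in C, K ω ∂μ) :
    ∀ C, MeasurableSet[m'] C →
      ∫ ω in C ∩ W ⁻¹' {wv}, V ω ∂μ = ∫ ω in C ∩ W ⁻¹' {wv}, K ω ∂μ := by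
  have hmU_le : mγ.comap U ≤ mΩ := hU.comap_le
  have hn : m ⊔ mγ.comap U ≤ mΩ := sup_le hm hmU_le
  have hm'Ω : m' ≤ mΩ := hm'₂.trans hn
  set A : Set Ω := W ⁻¹' {wv} with hA_def
  have hA : MeasurableSet A := hW (measurableSet_singleton wv)
  set iA : Ω → ℝ := A.indicator (fun _ => (1:ℝ)) with hiA_def
  have hiAint : Integrable iA μ := (integrable_const (1:ℝ)).indicator hA
  set φ : Ω → ℝ := μ[iA | m] with hφ_def
  have hφm : StronglyMeasurable[m] φ := stronglyMeasurable_condExp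
  have hφint : Integrable φ μ := integrable_condExp
  -- bound on φ
  have hφ_le : φ ≤ᵐ[μ] fun _ => (1:ℝ) := by
    have h1 : μ[fun _ => (1:ℝ) | m] = fun _ => (1:ℝ) := condExp_const hm (1:ℝ)
    have := condExp_mono (μ := μ) (m := m) hiAint (integrable_const (1:ℝ))
      (Eventually.of_forall fun ω => by
        by_cases hω : ω ∈ A <;>
          simp [hiA_def, Set.indicator_of_mem, Set.indicator_of_notMem, hω])
    rwa [h1] at this
  have hφ_nonneg : (fun _ => (0:ℝ)) ≤ᵐ[μ] φ :=
    condExp_nonneg (Eventually.of_forall fun ω =>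
      Set.indicator_nonneg (fun _ _ => zero_le_one) ω)
  have hφ_bd : ∀ᵐ ω ∂μ, ‖φ ω‖ ≤ 1 := by
    filter_upwards [hφ_le, hφ_nonneg] with ω h1 h0
    rw [Real.norm_eq_abs, abs_le]
    exact ⟨by linarith [h0], h1⟩
  -- the generating π-system of n
  set p : Set (Set Ω) :=
    {E : Set Ω | ∃ s, MeasurableSet[m] s ∧ ∃ t : Set γ, MeasurableSet t ∧ E = s ∩ U ⁻¹' t}
    with hp_def
  have hgen : m ⊔ mγ.comap U = MeasurableSpace.generateFrom p := by
    refine le_antisymm (sup_le ?_ ?_) (MeasurableSpace.generateFrom_le ?_)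
    · intro s hs
      exact MeasurableSpace.measurableSet_generateFrom
        ⟨s, hs, Set.univ, MeasurableSet.univ, by simp⟩
    · intro E hE
      obtain ⟨t, ht, rfl⟩ := hE
      exact MeasurableSpace.measurableSet_generateFrom
        ⟨Set.univ, MeasurableSet.univ, t, ht, by simp⟩
    · rintro E ⟨s, hs, t, ht, rfl⟩
      exact (le_sup_left (b := mγ.comap U) _ hs).inter
        ((le_sup_right (a := m) _ ⟨t, ht, rfl⟩))
  have hpi : IsPiSystem p := by
    rintro E1 ⟨s1, hs1, t1, ht1, rfl⟩ E2 ⟨s2, hs2, t2, ht2, rfl⟩ -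
    refine ⟨s1 ∩ s2, hs1.inter hs2, t1 ∩ t2, ht1.inter ht2, ?_⟩
    rw [Set.preimage_inter]
    ext ω; simp; tauto
  -- base identity on all of n
  have hbase : ∀ E : Set Ω, MeasurableSet[m ⊔ mγ.comap U] E →
      ∫ ω in E, iA ω ∂μ = ∫ ω in E, φ ω ∂μ := by
    intro E hE
    refine MeasurableSpace.induction_on_inter (m := m ⊔ mγ.comap U)
      (C := fun E _ => ∫ ω in E, iA ω ∂μ = ∫ ω in E, φ ω ∂μ) hgen hpi ?_ ?_ ?_ ?_ E hE
    · simp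
    · rintro E ⟨s, hs, t, ht, rfl⟩
      have hsΩ : MeasurableSet s := hm _ hs
      have hUt : MeasurableSet (U ⁻¹' t) := hU ht
      set iUt : Ω → ℝ := (U ⁻¹' t).indicator (fun _ => (1:ℝ)) with hiUt_def
      have hiUt_int : Integrable iUt μ := (integrable_const (1:ℝ)).indicator hUt
      set ψt : Ω → ℝ := μ[iUt | m] with hψt_def
      have hprod := (condIndepFun_iff_condExp_inter_preimage_eq_mul
        (m' := m) (hm' := hm) (μ := μ) hW hU).mp hCI {wv} t (measurableSet_singleton wv) ht
      have l1 : ∫ ω in s ∩ U ⁻¹' t, iA ω ∂μ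
          = ∫ ω in s, ((A ∩ U ⁻¹' t).indicator (fun _ => (1:ℝ))) ω ∂μ := by
        rw [← setIntegral_indicator hUt]
        congr 1
        rw [hiA_def, Set.indicator_indicator, Set.inter_comm]
      have l2 : ∫ ω in s, ((A ∩ U ⁻¹' t).indicator (fun _ => (1:ℝ))) ω ∂μ
          = ∫ ω in s, φ ω * ψt ω ∂μ := by
        rw [← setIntegral_condExp hm ((integrable_const (1:ℝ)).indicator (hA.inter hUt)) hs]
        refine setIntegral_congr_ae hsΩ ?_
        filter_upwards [hprod] with ω hω _
        exact hω
      have hφiUt_int : Integrable (φ * iUt) μ := by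
        have := hiUt_int.bdd_mul (c := 1) (hφint.aestronglyMeasurable) hφ_bd
        exact this
      have r1 : ∫ ω in s ∩ U ⁻¹' t, φ ω ∂μ = ∫ ω in s, (φ * iUt) ω ∂μ := by
        rw [← setIntegral_indicator hUt]
        refine setIntegral_congr_ae hsΩ (Eventually.of_forall fun ω _ => ?_)
        by_cases hω : ω ∈ U ⁻¹' t <;>
          simp [hiUt_def, Set.indicator_of_mem, Set.indicator_of_notMem, hω]
      have r2 : ∫ ω in s, (φ * iUt) ω ∂μ = ∫ ω in s, φ ω * ψt ω ∂μ := by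
        rw [← setIntegral_condExp hm hφiUt_int hs]
        refine setIntegral_congr_ae hsΩ ?_
        filter_upwards [condExp_mul_of_stronglyMeasurable_left hφm hφiUt_int hiUt_int] with ω hω _
        rw [hω]; rfl
      rw [l1, l2, r1, r2]
    · intro E hE hIH
      have hEΩ : MeasurableSet E := hn _ hE
      have h1 := integral_add_compl hEΩ hiAint
      have h2 := integral_add_compl hEΩ hφint
      have h3 : ∫ ω, φ ω ∂μ = ∫ ω, iA ω ∂μ := integral_condExp hm
      linarith
    · intro f hdisj hfm hIH
      rw [integral_iUnion (fun i => hn _ (hfm i)) hdisj hiAint.integrableOn,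
        integral_iUnion (fun i => hn _ (hfm i)) hdisj hφint.integrableOn]
      exact tsum_congr hIH
  -- φ is a version of μ[iA | m ⊔ mγ.comap U]
  have hφ_eq : φ =ᵐ[μ] μ[iA | m ⊔ mγ.comap U] :=
    ae_eq_condExp_of_forall_setIntegral_eq hn hiAint
      (fun s _ _ => hφint.integrableOn)
      (fun s hs _ => (hbase s hs).symm)
      ((hφm.mono (le_sup_left (b := mγ.comap U))).aestronglyMeasurable (μ := μ))
  -- main integral identity against n-measurable integrable functions
  have hmain : ∀ V' : Ω → ℝ, Integrable V' μ → StronglyMeasurable[m ⊔ mγ.comap U] V' →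
      ∫ ω in A, V' ω ∂μ = ∫ ω, V' ω * φ ω ∂μ := by
    intro V' hint hsm
    have hVA_int : Integrable (V' * iA) μ := by
      have hbd : ∀ᵐ ω ∂μ, ‖iA ω‖ ≤ 1 := Eventually.of_forall fun ω => by
        by_cases hω : ω ∈ A <;>
          simp [hiA_def, Set.indicator_of_mem, Set.indicator_of_notMem, hω]
      have := hint.bdd_mul (c := 1) hiAint.aestronglyMeasurable hbd
      have h2 : (V' * iA) = fun ω => iA ω * V' ω := by funext ω; simp [mul_comm]
      rw [h2]; exact this
    have h1 : ∫ ω in A, V' ω ∂μ = ∫ ω, (V' * iA) ω ∂μ := by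
      rw [← integral_indicator hA]
      congr 1; funext ω
      by_cases hω : ω ∈ A <;>
        simp [hiA_def, Set.indicator_of_mem, Set.indicator_of_notMem, hω]
    have h2 := condExp_mul_of_stronglyMeasurable_left (μ := μ) hsm hVA_int hiAint
    calc ∫ ω in A, V' ω ∂μ = ∫ ω, (V' * iA) ω ∂μ := h1
      _ = ∫ ω, (μ[V' * iA | m ⊔ mγ.comap U]) ω ∂μ := (integral_condExp hn).symm
      _ = ∫ ω, V' ω * φ ω ∂μ := by
          refine integral_congr_ae ?_
          filter_upwards [h2, hφ_eq] with ω hω hφω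
          rw [hω]
          show V' ω * (μ[iA| m ⊔ mγ.comap U]) ω = V' ω * φ ω
          rw [← hφω]
  -- now the conclusion
  intro C hC
  have hC_n : MeasurableSet[m ⊔ mγ.comap U] C := hm'₂ _ hC
  have hCΩ : MeasurableSet C := hm'Ω _ hC
  have hVn : StronglyMeasurable[m ⊔ mγ.comap U] (C.indicator V) :=
    ((hV.mono le_sup_right le_rfl).stronglyMeasurable).indicator hC_n
  have hKn : StronglyMeasurable[m ⊔ mγ.comap U] (C.indicator K) :=
    ((hK.mono hm'₂ le_rfl).stronglyMeasurable).indicator hC_n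
  have e1 : ∫ ω in C ∩ A, V ω ∂μ = ∫ ω in A, (C.indicator V) ω ∂μ := by
    rw [setIntegral_indicator hCΩ, Set.inter_comm]
  have e1' : ∫ ω in C ∩ A, K ω ∂μ = ∫ ω in A, (C.indicator K) ω ∂μ := by
    rw [setIntegral_indicator hCΩ, Set.inter_comm]
  have e2 := hmain (C.indicator V) (hVint.indicator hCΩ) hVn
  have e2' := hmain (C.indicator K) (hKint.indicator hCΩ) hKn
  -- ψ := 1_C * φ
  set ψ : Ω → ℝ := fun ω => C.indicator (fun _ => (1:ℝ)) ω * φ ω with hψ_def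
  have hψm' : StronglyMeasurable[m'] ψ :=
    (stronglyMeasurable_const.indicator hC).mul (hφm.mono hm'₁)
  have hψ_bd : ∀ᵐ ω ∂μ, ‖ψ ω‖ ≤ 1 := by
    filter_upwards [hφ_bd] with ω hω
    by_cases hc : ω ∈ C
    · simpa [hψ_def, Set.indicator_of_mem hc] using hω
    · simp [hψ_def, Set.indicator_of_notMem hc]
  have hψV_int : Integrable (ψ * V) μ :=
    hVint.bdd_mul (c := 1) ((hψm'.mono hm'Ω).aestronglyMeasurable) hψ_bd
  have hψK_int : Integrable (ψ * K) μ :=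
    hKint.bdd_mul (c := 1) ((hψm'.mono hm'Ω).aestronglyMeasurable) hψ_bd
  have hK_eq : K =ᵐ[μ] μ[V | m'] :=
    ae_eq_condExp_of_forall_setIntegral_eq hm'Ω hVint
      (fun s _ _ => hKint.integrableOn)
      (fun s hs _ => (hKmean s hs).symm)
      ((hK.stronglyMeasurable).aestronglyMeasurable)
  have claim2 : ∫ ω, (ψ * V) ω ∂μ = ∫ ω, (ψ * K) ω ∂μ := by
    have hp := condExp_mul_of_stronglyMeasurable_left (μ := μ) hψm' hψV_int hVint
    calc ∫ ω, (ψ * V) ω ∂μ = ∫ ω, (μ[ψ * V | m']) ω ∂μ := (integral_condExp hm'Ω).symm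
      _ = ∫ ω, (ψ * K) ω ∂μ := by
          refine integral_congr_ae ?_
          filter_upwards [hp, hK_eq] with ω hω hKω
          rw [hω]
          show ψ ω * (μ[V|m']) ω = ψ ω * K ω
          rw [hKω]
  have key1 : ∀ ω, (C.indicator V) ω * φ ω = (ψ * V) ω := by
    intro ω
    by_cases hc : ω ∈ C <;>
      simp [hψ_def, Set.indicator_of_mem, Set.indicator_of_notMem, hc] <;> ring
  have key2 : ∀ ω, (C.indicator K) ω * φ ω = (ψ * K) ω := by
    intro ω
    by_cases hc : ω ∈ C <;>
      simp [hψ_def, Set.indicator_of_mem, Set.indicator_of_notMem, hc] <;> ring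
  calc ∫ ω in C ∩ A, V ω ∂μ = ∫ ω in A, (C.indicator V) ω ∂μ := e1
    _ = ∫ ω, (C.indicator V) ω * φ ω ∂μ := e2
    _ = ∫ ω, (ψ * V) ω ∂μ := by simp_rw [key1]
    _ = ∫ ω, (ψ * K) ω ∂μ := claim2
    _ = ∫ ω, (C.indicator K) ω * φ ω ∂μ := by simp_rw [key2]
    _ = ∫ ω in A, (C.indicator K) ω ∂μ := e2'.symm
    _ = ∫ ω in C ∩ A, K ω ∂μ := e1'.symm

lemma prop2_aux {Ω α β γ : Type*} {mα : MeasurableSpace α} {mβ : MeasurableSpace β}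
    {mγ : MeasurableSpace γ}
    [mΩ : MeasurableSpace Ω] [StandardBorelSpace Ω] [Nonempty Ω]
    (P : Measure Ω) [IsProbabilityMeasure P]
    (X : Ω → α) (S : Ω → β) (T G Y : Ω → ℝ) (U : Ω → γ)
    (hX : Measurable X) (hS : Measurable S) (hT : Measurable T) (hG : Measurable G)
    (hY : Measurable Y) (hU : Measurable U) (tv : ℝ)
    (hpos0 : P ({ω | T ω = tv} ∩ G ⁻¹' {0}) ≠ 0)
    (hpos1 : P ({ω | T ω = tv} ∩ G ⁻¹' {1}) ≠ 0)
    (hYint : Integrable Y P)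
    (hYU : Measurable[mγ.comap U] Y) (hSU : mβ.comap S ≤ mγ.comap U)
    (hiv : CondIndepFun (mα.comap X) hX.comap_le T (fun ω => (Y ω, S ω)) (P[|G ⁻¹' {1}]))
    (hext : CondIndepFun (mα.comap X) hX.comap_le G U P)
    (hlat : CondIndepFun (MeasurableSpace.comap (fun ω => (X ω, S ω)) inferInstance)
      (hX.prodMk hS).comap_le T Y (P[|G ⁻¹' {0}])) :
    ∃ h : α × β → ℝ, Measurable h ∧
      IsCondMean (P[|{ω | T ω = tv} ∩ G ⁻¹' {0}]) (fun ω => (X ω, S ω)) Y h ∧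
      IsCondMean (P[|{ω | T ω = tv} ∩ G ⁻¹' {1}]) (fun ω => (X ω, S ω)) Y h := by
  classical
  have hZ : Measurable (fun ω => (X ω, S ω)) := hX.prodMk hS
  have hmZeq : MeasurableSpace.comap (fun ω => (X ω, S ω))
      (inferInstance : MeasurableSpace (α × β)) = mα.comap X ⊔ mβ.comap S := by
    rw [show (inferInstance : MeasurableSpace (α × β))
        = mα.comap Prod.fst ⊔ mβ.comap Prod.snd from rfl,
      MeasurableSpace.comap_sup, MeasurableSpace.comap_comp, MeasurableSpace.comap_comp]
    rfl
  have hmZ_le : mα.comap X ⊔ mβ.comap S ≤ mΩ := sup_le hX.comap_le hS.comap_le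
  set k : Ω → ℝ := P[Y | mα.comap X ⊔ mβ.comap S] with hk_def
  have hkm : Measurable[mα.comap X ⊔ mβ.comap S] k := stronglyMeasurable_condExp.measurable
  obtain ⟨h, hhm, hhZ⟩ := exists_factor (fun ω => (X ω, S ω)) k (by rw [hmZeq]; exact hkm)
  have hkint : Integrable k P := integrable_condExp
  have hkmean : ∀ C, MeasurableSet[mα.comap X ⊔ mβ.comap S] C →
      ∫ ω in C, Y ω ∂P = ∫ ω in C, k ω ∂P :=
    fun C hC => (setIntegral_condExp hmZ_le hYint hC).symm
  have cond_eq : ∀ (s D : Set Ω), MeasurableSet D → ∀ f : Ω → ℝ,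
      ∫ ω in D, f ω ∂(P[|s]) = ((P s)⁻¹).toReal * ∫ ω in D ∩ s, f ω ∂P := by
    intro s D hD f
    simp only [ProbabilityTheory.cond, Measure.restrict_smul, Measure.restrict_restrict hD,
      integral_smul_measure, smul_eq_mul]
  have hGpos0 : P (G ⁻¹' {(0:ℝ)}) ≠ 0 :=
    fun h0 => hpos0 (measure_mono_null Set.inter_subset_right h0)
  have hGpos1 : P (G ⁻¹' {(1:ℝ)}) ≠ 0 :=
    fun h0 => hpos1 (measure_mono_null Set.inter_subset_right h0)
  -- step 1: external validity
  have hext_step : ∀ gv : ℝ, ∀ C, MeasurableSet[mα.comap X ⊔ mβ.comap S] C →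
      ∫ ω in C ∩ G ⁻¹' {gv}, Y ω ∂P = ∫ ω in C ∩ G ⁻¹' {gv}, k ω ∂P :=
    fun gv => key_lemma (mα.comap X) (mα.comap X ⊔ mβ.comap S) P hX.comap_le G hG gv U hU hext
      le_sup_left (sup_le le_sup_left (hSU.trans le_sup_right)) Y k hYint hYU hkint hkm hkmean
  have step1 : ∀ gv : ℝ, P (G ⁻¹' {gv}) ≠ 0 →
      ∀ C, MeasurableSet[mα.comap X ⊔ mβ.comap S] C →
        ∫ ω in C, Y ω ∂(P[|G ⁻¹' {gv}]) = ∫ ω in C, k ω ∂(P[|G ⁻¹' {gv}]) := by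
    intro gv _ C hC
    rw [cond_eq _ C (hmZ_le _ hC) Y, cond_eq _ C (hmZ_le _ hC) k, hext_step gv C hC]
  -- integrability under conditional measures
  have hint_cond : ∀ (s : Set Ω), P s ≠ 0 → ∀ f : Ω → ℝ, Integrable f P →
      Integrable f (P[|s]) := by
    intro s hs f hf
    unfold ProbabilityTheory.cond
    exact (hf.restrict).smul_measure (ENNReal.inv_ne_top.2 hs)
  haveI hP0 : IsProbabilityMeasure (P[|G ⁻¹' {(0:ℝ)}]) :=
    cond_isProbabilityMeasure hGpos0
  haveI hP1 : IsProbabilityMeasure (P[|G ⁻¹' {(1:ℝ)}]) :=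
    cond_isProbabilityMeasure hGpos1
  -- step 2 for g = 1 (internal validity)
  have hS_pair : mβ.comap S ≤ MeasurableSpace.comap (fun ω => (Y ω, S ω)) inferInstance := by
    calc mβ.comap S = (mβ.comap Prod.snd).comap (fun ω => (Y ω, S ω)) := by
          rw [MeasurableSpace.comap_comp]; exact rfl
      _ ≤ _ := MeasurableSpace.comap_mono measurable_snd.comap_le
  have hY_pair : Measurable[MeasurableSpace.comap (fun ω => (Y ω, S ω)) inferInstance] Y :=
    measurable_fst.comp (comap_measurable _)
  have hfin1 : ∀ C, MeasurableSet[mα.comap X ⊔ mβ.comap S] C →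
      ∫ ω in C ∩ T ⁻¹' {tv}, Y ω ∂(P[|G ⁻¹' {(1:ℝ)}])
        = ∫ ω in C ∩ T ⁻¹' {tv}, k ω ∂(P[|G ⁻¹' {(1:ℝ)}]) :=
    key_lemma (mα.comap X) (mα.comap X ⊔ mβ.comap S) (P[|G ⁻¹' {(1:ℝ)}]) hX.comap_le
      T hT tv (fun ω => (Y ω, S ω)) (hY.prodMk hS) hiv
      le_sup_left (sup_le le_sup_left (hS_pair.trans le_sup_right)) Y k
      (hint_cond _ hGpos1 Y hYint) hY_pair (hint_cond _ hGpos1 k hkint) hkm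
      (step1 1 hGpos1)
  -- step 2 for g = 0 (latent unconfoundedness)
  have hk_pair : Measurable[MeasurableSpace.comap (fun ω => (X ω, S ω)) inferInstance] k := by
    rw [hmZeq]; exact hkm
  have hfin0 : ∀ C, MeasurableSet[MeasurableSpace.comap (fun ω => (X ω, S ω)) inferInstance] C →
      ∫ ω in C ∩ T ⁻¹' {tv}, Y ω ∂(P[|G ⁻¹' {(0:ℝ)}])
        = ∫ ω in C ∩ T ⁻¹' {tv}, k ω ∂(P[|G ⁻¹' {(0:ℝ)}]) :=
    key_lemma (MeasurableSpace.comap (fun ω => (X ω, S ω)) inferInstance)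
      (MeasurableSpace.comap (fun ω => (X ω, S ω)) inferInstance)
      (P[|G ⁻¹' {(0:ℝ)}]) (hX.prodMk hS).comap_le
      T hT tv Y hY hlat le_rfl le_sup_left Y k
      (hint_cond _ hGpos0 Y hYint) (comap_measurable _)
      (hint_cond _ hGpos0 k hkint) hk_pair
      (fun C hC => step1 0 hGpos0 C (by rw [hmZeq] at hC; exact hC))
  -- assembly
  have hTpre : T ⁻¹' {tv} = {ω | T ω = tv} := by ext ω; simp
  have final : ∀ gv : ℝ, P (G ⁻¹' {gv}) ≠ 0 →
      (∀ C, MeasurableSet[mα.comap X ⊔ mβ.comap S] C →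
        ∫ ω in C ∩ T ⁻¹' {tv}, Y ω ∂(P[|G ⁻¹' {gv}])
          = ∫ ω in C ∩ T ⁻¹' {tv}, k ω ∂(P[|G ⁻¹' {gv}])) →
      IsCondMean (P[|{ω | T ω = tv} ∩ G ⁻¹' {gv}]) (fun ω => (X ω, S ω)) Y h := by
    intro gv hgpos hfin B hB
    have hDmZ : MeasurableSet[mα.comap X ⊔ mβ.comap S] ((fun ω => (X ω, S ω)) ⁻¹' B) := by
      rw [← hmZeq]; exact ⟨B, hB, rfl⟩
    have hD : MeasurableSet ((fun ω => (X ω, S ω)) ⁻¹' B) := hZ hB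
    have hDT : MeasurableSet (((fun ω => (X ω, S ω)) ⁻¹' B) ∩ T ⁻¹' {tv}) :=
      hD.inter (hT (measurableSet_singleton tv))
    have hscale := hfin _ hDmZ
    rw [cond_eq _ _ hDT Y, cond_eq _ _ hDT k] at hscale
    have hne : ((P (G ⁻¹' {gv}))⁻¹).toReal ≠ 0 := by
      rw [ENNReal.toReal_ne_zero]
      exact ⟨ENNReal.inv_ne_zero.2 (measure_ne_top P _), ENNReal.inv_ne_top.2 hgpos⟩
    have hcore := mul_left_cancel₀ hne hscale
    have hsets : (fun ω => (X ω, S ω)) ⁻¹' B ∩ ({ω | T ω = tv} ∩ G ⁻¹' {gv})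
        = ((fun ω => (X ω, S ω)) ⁻¹' B ∩ T ⁻¹' {tv}) ∩ G ⁻¹' {gv} := by
      rw [hTpre]; exact (Set.inter_assoc _ _ _).symm
    rw [cond_eq _ _ hD Y, cond_eq _ _ hD, hsets]
    simp only [hhZ]
    rw [hcore]
  refine ⟨h, hhm, ?_, ?_⟩
  · exact final 0 hGpos0 (fun C hC => hfin0 C (by rw [hmZeq]; exact hC))
  · exact final 1 hGpos1 hfin1

/-- **Proposition 2.** If `T ⊥ (Y(t), S(t)) | X, G=1` (internal validity),
`G ⊥ (Y(0),Y(1),S(0),S(1)) | X` (conditional external validity), and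
`T ⊥ Y(t) | X, S(t), G=0` (latent unconfoundedness) for `t ∈ {0,1}`, then mean exchangeability
holds: `E[Y(t) | X, S(t), T=t, G=1] = E[Y(t) | X, S(t), T=t, G=0]`, expressed as the existence of
a common version of the two conditional means. -/
theorem mean_exchangeability_of_external_validity_and_latent_unconfoundedness
    {Ω : Type*} [MeasurableSpace Ω] [StandardBorelSpace Ω] [Nonempty Ω]
    {α β : Type*} [mα : MeasurableSpace α] [mβ : MeasurableSpace β]
    (P : Measure Ω) [IsProbabilityMeasure P]
    (X : Ω → α) (S0 S1 : Ω → β) (T G Y0 Y1 : Ω → ℝ)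
    (hX : Measurable X) (hS0 : Measurable S0) (hS1 : Measurable S1)
    (hT : Measurable T) (hG : Measurable G) (hY0 : Measurable Y0) (hY1 : Measurable Y1)
    (hTbin : ∀ ω, T ω = 0 ∨ T ω = 1) (hGbin : ∀ ω, G ω = 0 ∨ G ω = 1)
    -- all conditioning events have positive probability
    (hpos : ∀ tv gv : ℝ, tv ∈ ({0, 1} : Set ℝ) → gv ∈ ({0, 1} : Set ℝ) →
      P ({ω | T ω = tv} ∩ G ⁻¹' {gv}) ≠ 0)
    (hY0int : Integrable Y0 P) (hY1int : Integrable Y1 P)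
    -- internal validity: `T ⊥ (Y(t), S(t)) | X` within `G = 1`
    (hiv0 : CondIndepFun (MeasurableSpace.comap X mα) hX.comap_le
      T (fun ω => (Y0 ω, S0 ω)) (P[|G ⁻¹' {1}]))
    (hiv1 : CondIndepFun (MeasurableSpace.comap X mα) hX.comap_le
      T (fun ω => (Y1 ω, S1 ω)) (P[|G ⁻¹' {1}]))
    -- conditional external validity: `G ⊥ (Y(0), Y(1), S(0), S(1)) | X`
    (hext : CondIndepFun (MeasurableSpace.comap X mα) hX.comap_le
      G (fun ω => ((Y0 ω, Y1 ω), (S0 ω, S1 ω))) P)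
    -- latent unconfoundedness: `T ⊥ Y(t) | X, S(t)` within `G = 0`
    (hlat0 : CondIndepFun (MeasurableSpace.comap (fun ω => (X ω, S0 ω)) inferInstance)
      (hX.prodMk hS0).comap_le T Y0 (P[|G ⁻¹' {0}]))
    (hlat1 : CondIndepFun (MeasurableSpace.comap (fun ω => (X ω, S1 ω)) inferInstance)
      (hX.prodMk hS1).comap_le T Y1 (P[|G ⁻¹' {0}])) :
    ∀ t : Bool, ∃ h : α × β → ℝ, Measurable h ∧
      IsCondMean (P[|{ω | T ω = (if t then 1 else 0)} ∩ G ⁻¹' {0}])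
        (fun ω => (X ω, if t then S1 ω else S0 ω)) (if t then Y1 else Y0) h ∧
      IsCondMean (P[|{ω | T ω = (if t then 1 else 0)} ∩ G ⁻¹' {1}])
        (fun ω => (X ω, if t then S1 ω else S0 ω)) (if t then Y1 else Y0) h := by
  intro t
  have h01 : (0:ℝ) ∈ ({0,1} : Set ℝ) := by simp
  have h11 : (1:ℝ) ∈ ({0,1} : Set ℝ) := by simp
  cases t
  · exact prop2_aux P X S0 T G Y0 (fun ω => ((Y0 ω, Y1 ω), (S0 ω, S1 ω)))
      hX hS0 hT hG hY0 ((hY0.prodMk hY1).prodMk (hS0.prodMk hS1)) 0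
      (hpos 0 0 h01 h01) (hpos 0 1 h01 h11) hY0int
      ((measurable_fst.comp measurable_fst).comp (comap_measurable _))
      (by
        calc mβ.comap S0 = (mβ.comap (fun q : (ℝ × ℝ) × β × β => q.2.1)).comap (fun ω => ((Y0 ω, Y1 ω), (S0 ω, S1 ω))) := by rw [MeasurableSpace.comap_comp]; exact rfl
          _ ≤ _ := MeasurableSpace.comap_mono (measurable_fst.comp measurable_snd).comap_le)
      hiv0 hext hlat0
  · exact prop2_aux P X S1 T G Y1 (fun ω => ((Y0 ω, Y1 ω), (S0 ω, S1 ω)))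
      hX hS1 hT hG hY1 ((hY0.prodMk hY1).prodMk (hS0.prodMk hS1)) 1
      (hpos 1 0 h11 h01) (hpos 1 1 h11 h11) hY1int
      ((measurable_snd.comp measurable_fst).comp (comap_measurable _))
      (by
        calc mβ.comap S1 = (mβ.comap (fun q : (ℝ × ℝ) × β × β => q.2.2)).comap (fun ω => ((Y0 ω, Y1 ω), (S0 ω, S1 ω))) := by rw [MeasurableSpace.comap_comp]; exact rfl
          _ ≤ _ := MeasurableSpace.comap_mono (measurable_snd.comp measurable_snd).comap_le)
      hiv1 hext hlat1
end

section
/- Under internal validity of the RCT (T ⊥ (Y(t), S(t)) | X, G=1), strict overlap, and mean exchangeability (E[Y | X, S, T, G=1] = E[Y | X, S, T, G=0]), the average treatment effect in the RCT τ = E[Y(1) - Y(0) | G=1] is identified as τ = E[ E{h(X,S,T) | X, T=1, G=1} - E{h(X,S,T) | X, T=0, G=1} | G=1 ], where h(X,S,T) = E[Y | X, S, T, G=0] is computable from the observational data. -/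
open MeasureTheory ProbabilityTheory

/-- Pull-out helper: `∫ F·g = ∫ F·E[g|m]` for `m`-measurable `F`. -/
lemma integral_mul_condexp {Ω : Type*} {m : MeasurableSpace Ω} [mΩ : MeasurableSpace Ω]
    (hm : m ≤ mΩ) (μ : Measure Ω) [IsProbabilityMeasure μ] {F g : Ω → ℝ}
    (hF : StronglyMeasurable[m] F) (hFg : Integrable (fun ω => F ω * g ω) μ)
    (hg : Integrable g μ) :
    ∫ ω, F ω * g ω ∂μ = ∫ ω, F ω * (μ[g|m]) ω ∂μ := by
  have h := condExp_mul_of_stronglyMeasurable_left hF hFg hg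
  calc ∫ ω, F ω * g ω ∂μ = ∫ ω, (μ[(fun ω => F ω * g ω)|m]) ω ∂μ :=
        (integral_condExp (μ := μ) (f := fun ω => F ω * g ω) hm).symm
    _ = ∫ ω, F ω * (μ[g|m]) ω ∂μ := integral_congr_ae h


/-- Doubling lemma: under conditional independence of `T` and `W` given `σ(X)`,
the conditional expectation of an indicator of a `T`-event given `σ(X) ⊔ σ(W)`
equals the one given `σ(X)`. -/
lemma condexp_indicator_sup_comap
    {Ω α γ : Type*} {mα : MeasurableSpace α} {mγ : MeasurableSpace γ}
    [mΩ : MeasurableSpace Ω] [StandardBorelSpace Ω] [Nonempty Ω]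
    (μ : Measure Ω) [IsProbabilityMeasure μ]
    {X : Ω → α} (hX : Measurable X) {T : Ω → ℝ} (hT : Measurable T) {W : Ω → γ}
    (hW : Measurable W)
    (hind : CondIndepFun (mα.comap X) hX.comap_le T W μ)
    {A : Set ℝ} (hA : MeasurableSet A) :
    μ[(T ⁻¹' A).indicator (fun _ => (1:ℝ)) | mα.comap X ⊔ mγ.comap W]
      =ᵐ[μ] μ[(T ⁻¹' A).indicator (fun _ => (1:ℝ)) | mα.comap X] := by
  have hm : mα.comap X ≤ mΩ := hX.comap_le
  have hmW : mγ.comap W ≤ mΩ := hW.comap_le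
  have hm₂ : mα.comap X ⊔ mγ.comap W ≤ mΩ := sup_le hm hmW
  set f : Ω → ℝ := (T ⁻¹' A).indicator (fun _ => (1:ℝ)) with hf_def
  have hTA : MeasurableSet (T ⁻¹' A) := hT hA
  have hf_int : Integrable f μ := (integrable_const (1:ℝ)).indicator hTA
  set g : Ω → ℝ := μ[f | mα.comap X] with hg_def
  have hg_int : Integrable g μ := integrable_condExp
  -- the π-system generating the sup σ-algebra
  set C : Set (Set Ω) :=
    {s | ∃ u v, MeasurableSet[mα.comap X] u ∧ MeasurableSet[mγ.comap W] v ∧ s = u ∩ v}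
    with hC_def
  have h_eq : (mα.comap X ⊔ mγ.comap W) = MeasurableSpace.generateFrom C := by
    refine le_antisymm (sup_le ?_ ?_) (MeasurableSpace.generateFrom_le ?_)
    · intro u hu
      exact MeasurableSpace.measurableSet_generateFrom
        ⟨u, Set.univ, hu, MeasurableSet.univ, (Set.inter_univ u).symm⟩
    · intro v hv
      exact MeasurableSpace.measurableSet_generateFrom
        ⟨Set.univ, v, MeasurableSet.univ, hv, (Set.univ_inter v).symm⟩
    · rintro s ⟨u, v, hu, hv, rfl⟩
      exact MeasurableSet.inter (MeasurableSpace.le_def.mp le_sup_left u hu)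
        (MeasurableSpace.le_def.mp le_sup_right v hv)
  have h_pi : IsPiSystem C := by
    rintro s ⟨u, v, hu, hv, rfl⟩ t ⟨u', v', hu', hv', rfl⟩ -
    refine ⟨u ∩ u', v ∩ v', hu.inter hu', hv.inter hv', ?_⟩
    rw [Set.inter_inter_inter_comm]
  -- key set-integral identity on all sets of the sup σ-algebra
  have main : ∀ s : Set Ω, MeasurableSet[mα.comap X ⊔ mγ.comap W] s →
      ∫ ω in s, g ω ∂μ = ∫ ω in s, f ω ∂μ := by
    refine @MeasurableSpace.induction_on_inter Ω (mα.comap X ⊔ mγ.comap W)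
      (fun s _ => ∫ ω in s, g ω ∂μ = ∫ ω in s, f ω ∂μ) C
      h_eq h_pi (by simp) ?_ ?_ ?_
    · -- basic sets u ∩ v
      rintro s ⟨u, v, hu, hv, rfl⟩
      obtain ⟨tv, htv, rfl⟩ : ∃ tv, MeasurableSet tv ∧ W ⁻¹' tv = v :=
        MeasurableSpace.measurableSet_comap.mp hv
      have hum : MeasurableSet u := hm u hu
      have hvm : MeasurableSet (W ⁻¹' tv) := hW htv
      have hind' := (condIndepFun_iff_condExp_inter_preimage_eq_mul
        (hm' := hX.comap_le) hT hW).mp hind A tv hA htv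
      have hχv_int : Integrable ((W ⁻¹' tv).indicator (fun _ => (1:ℝ))) μ :=
        (integrable_const (1:ℝ)).indicator hvm
      have hug_sm : StronglyMeasurable[mα.comap X]
          (fun ω => u.indicator (fun _ => (1:ℝ)) ω * g ω) :=
        (stronglyMeasurable_const.indicator hu).mul stronglyMeasurable_condExp
      have hu_sm : StronglyMeasurable[mα.comap X] (u.indicator (fun _ => (1:ℝ))) :=
        stronglyMeasurable_const.indicator hu
      have hχAv_int : Integrable ((T ⁻¹' A ∩ W ⁻¹' tv).indicator (fun _ => (1:ℝ))) μ :=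
        (integrable_const (1:ℝ)).indicator (hTA.inter hvm)
      -- left side
      have eq1 : ∫ ω in u ∩ W ⁻¹' tv, g ω ∂μ
          = ∫ ω, (u.indicator (fun _ => (1:ℝ)) ω * g ω)
              * (W ⁻¹' tv).indicator (fun _ => (1:ℝ)) ω ∂μ := by
        rw [← integral_indicator (hum.inter hvm)]
        congr 1
        funext ω
        by_cases h1 : ω ∈ u <;> by_cases h2 : ω ∈ W ⁻¹' tv <;>
          simp [Set.indicator_apply, h1, h2, Set.mem_inter_iff]
      have hFg_int : Integrable (fun ω => (u.indicator (fun _ => (1:ℝ)) ω * g ω)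
          * (W ⁻¹' tv).indicator (fun _ => (1:ℝ)) ω) μ := by
        refine hg_int.abs.mono' ?_ ?_
        · exact (((hug_sm.mono hm).mul
            (stronglyMeasurable_const.indicator hvm)).aestronglyMeasurable)
        · filter_upwards with ω
          by_cases h1 : ω ∈ u <;> by_cases h2 : ω ∈ W ⁻¹' tv <;>
            simp [Set.indicator_apply, h1, h2, abs_nonneg]
      -- right side
      have eq2 : ∫ ω in u ∩ W ⁻¹' tv, f ω ∂μ
          = ∫ ω, u.indicator (fun _ => (1:ℝ)) ω
              * (T ⁻¹' A ∩ W ⁻¹' tv).indicator (fun _ => (1:ℝ)) ω ∂μ := by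
        rw [← integral_indicator (hum.inter hvm)]
        congr 1
        funext ω
        by_cases h1 : ω ∈ u <;> by_cases h2 : ω ∈ W ⁻¹' tv <;> by_cases h3 : ω ∈ T ⁻¹' A <;>
          simp [Set.indicator_apply, hf_def, h1, h2, h3, Set.mem_inter_iff]
      have hFg2_int : Integrable (fun ω => u.indicator (fun _ => (1:ℝ)) ω
          * (T ⁻¹' A ∩ W ⁻¹' tv).indicator (fun _ => (1:ℝ)) ω) μ := by
        refine (integrable_const (1:ℝ)).mono' ?_ ?_
        · exact ((hu_sm.mono hm).mul
            (stronglyMeasurable_const.indicator (hTA.inter hvm))).aestronglyMeasurable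
        · filter_upwards with ω
          by_cases h1 : ω ∈ u <;> by_cases h2 : ω ∈ T ⁻¹' A ∩ W ⁻¹' tv <;>
            simp [Set.indicator_apply, h1, h2]
      rw [eq1, eq2, integral_mul_condexp hm μ hug_sm hFg_int hχv_int,
        integral_mul_condexp hm μ hu_sm hFg2_int hχAv_int]
      refine integral_congr_ae ?_
      filter_upwards [hind'] with ω hω
      simp only [hω]
      ring
    · -- complements
      intro t htm hteq
      have ht : MeasurableSet t := hm₂ t htm
      have h1 : ∫ ω in t, g ω ∂μ + ∫ ω in tᶜ, g ω ∂μ = ∫ ω, g ω ∂μ :=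
        integral_add_compl ht hg_int
      have h2 : ∫ ω in t, f ω ∂μ + ∫ ω in tᶜ, f ω ∂μ = ∫ ω, f ω ∂μ :=
        integral_add_compl ht hf_int
      have h3 : ∫ ω, g ω ∂μ = ∫ ω, f ω ∂μ := integral_condExp hm
      linarith
    · -- countable disjoint unions
      intro s hdisj hsm hseq
      have hsm' : ∀ i, MeasurableSet (s i) := fun i => hm₂ _ (hsm i)
      rw [integral_iUnion hsm' hdisj hg_int.integrableOn,
        integral_iUnion hsm' hdisj hf_int.integrableOn]
      exact tsum_congr hseq
  exact (ae_eq_condExp_of_forall_setIntegral_eq hm₂ hf_int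
    (fun s _ _ => hg_int.integrableOn)
    (fun s hs _ => main s hs)
    (((show StronglyMeasurable[mα.comap X] g from stronglyMeasurable_condExp).mono
      (le_sup_left : mα.comap X ≤ mα.comap X ⊔ mγ.comap W)).aestronglyMeasurable)).symm

/-- A measurable version of a conditional mean of an integrable function is integrable. -/
lemma integrable_of_isCondMean
    {Ω β : Type*} [mΩ : MeasurableSpace Ω] [mβ : MeasurableSpace β]
    (Q : Measure Ω) [IsFiniteMeasure Q] {Z : Ω → β} (hZ : Measurable Z)
    {Y : Ω → ℝ} (hYint : Integrable Y Q) {M : β → ℝ} (hM : Measurable M)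
    (hver : IsCondMean Q Z Y M) : Integrable (fun ω => M (Z ω)) Q := by
  have haux : ∀ M' : β → ℝ, Measurable M' →
      (∀ B : Set β, MeasurableSet B → ∫ ω in Z ⁻¹' B, M' (Z ω) ∂Q ≤ ∫ ω, ‖Y ω‖ ∂Q) →
      ∫⁻ ω, ENNReal.ofReal (M' (Z ω)) ∂Q ≤ ENNReal.ofReal (∫ ω, ‖Y ω‖ ∂Q) := by
    intro M' hM' hv
    set sn : ℕ → Set β := fun n => M' ⁻¹' (Set.Icc 0 (n : ℝ)) with hsn_def
    have hsn : ∀ n, MeasurableSet (sn n) := fun n => hM' measurableSet_Icc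
    set fn : ℕ → Ω → ℝ := fun n => (Z ⁻¹' (sn n)).indicator (fun ω => M' (Z ω)) with hfn_def
    have hfn_meas : ∀ n, Measurable (fn n) :=
      fun n => ((hM'.comp hZ)).indicator (hZ (hsn n))
    have hfn_int : ∀ n, Integrable (fn n) Q := by
      intro n
      refine (integrable_const ((n : ℝ))).mono' (hfn_meas n).aestronglyMeasurable ?_
      filter_upwards with ω
      by_cases hmem : ω ∈ Z ⁻¹' (sn n)
      · have := hmem
        simp only [Set.mem_preimage, hsn_def, Set.mem_Icc] at this
        have h0 : (0:ℝ) ≤ (n:ℝ) := Nat.cast_nonneg n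
        simp only [hfn_def, Set.indicator_of_mem hmem, Real.norm_eq_abs, abs_le]
        exact ⟨by linarith [this.1], this.2⟩
      · simp [hfn_def, Set.indicator_of_notMem hmem, Nat.cast_nonneg]
    have hfn_nn : ∀ n, 0 ≤ᵐ[Q] fn n := by
      intro n
      filter_upwards with ω
      by_cases hmem : ω ∈ Z ⁻¹' (sn n)
      · have := hmem
        simp only [Set.mem_preimage, hsn_def, Set.mem_Icc] at this
        simp [hfn_def, Set.indicator_of_mem hmem, this.1]
      · simp [hfn_def, Set.indicator_of_notMem hmem]
    have hmono : Monotone fun n ω => ENNReal.ofReal (fn n ω) := by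
      intro n m hnm
      intro ω
      by_cases hmem : ω ∈ Z ⁻¹' (sn n)
      · have hmem' : ω ∈ Z ⁻¹' (sn m) := by
          have := hmem
          simp only [Set.mem_preimage, hsn_def, Set.mem_Icc] at this ⊢
          exact ⟨this.1, this.2.trans (by exact_mod_cast Nat.cast_le.mpr hnm)⟩
        simp [hfn_def, Set.indicator_of_mem hmem, Set.indicator_of_mem hmem']
      · simp [hfn_def, Set.indicator_of_notMem hmem]
    have hsup : ∀ ω, (⨆ n, ENNReal.ofReal (fn n ω)) = ENNReal.ofReal (M' (Z ω)) := by
      intro ω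
      refine le_antisymm (iSup_le fun n => ?_) ?_
      · by_cases hmem : ω ∈ Z ⁻¹' (sn n)
        · simp [hfn_def, Set.indicator_of_mem hmem]
        · simp [hfn_def, Set.indicator_of_notMem hmem]
      · by_cases hpos : 0 ≤ M' (Z ω)
        · refine le_iSup_of_le ⌈M' (Z ω)⌉₊ ?_
          have hmem : ω ∈ Z ⁻¹' (sn ⌈M' (Z ω)⌉₊) := by
            simp only [Set.mem_preimage, hsn_def, Set.mem_Icc]
            exact ⟨hpos, Nat.le_ceil _⟩
          simp [hfn_def, Set.indicator_of_mem hmem]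
        · simp [ENNReal.ofReal_eq_zero.mpr (le_of_not_ge hpos)]
      
    calc ∫⁻ ω, ENNReal.ofReal (M' (Z ω)) ∂Q
        = ∫⁻ ω, ⨆ n, ENNReal.ofReal (fn n ω) ∂Q := by
          congr 1; funext ω; rw [hsup ω]
      _ = ⨆ n, ∫⁻ ω, ENNReal.ofReal (fn n ω) ∂Q :=
          lintegral_iSup (fun n => (hfn_meas n).ennreal_ofReal) hmono
      _ ≤ ENNReal.ofReal (∫ ω, ‖Y ω‖ ∂Q) := by
          refine iSup_le fun n => ?_
          rw [← ofReal_integral_eq_lintegral_ofReal (hfn_int n) (hfn_nn n)]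
          refine ENNReal.ofReal_le_ofReal ?_
          rw [hfn_def]
          rw [integral_indicator (hZ (hsn n))]
          exact hv (sn n) (hsn n)
  have hb1 : ∀ B : Set β, MeasurableSet B → ∫ ω in Z ⁻¹' B, M (Z ω) ∂Q ≤ ∫ ω, ‖Y ω‖ ∂Q := by
    intro B hB
    rw [← hver B hB]
    calc ∫ ω in Z ⁻¹' B, Y ω ∂Q ≤ ∫ ω in Z ⁻¹' B, ‖Y ω‖ ∂Q := by
          refine integral_mono_ae hYint.restrict hYint.norm.restrict ?_
          filter_upwards with ω using le_abs_self _
      _ ≤ ∫ ω, ‖Y ω‖ ∂Q :=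
          setIntegral_le_integral hYint.norm (by filter_upwards with ω using norm_nonneg _)
  have hb2 : ∀ B : Set β, MeasurableSet B →
      ∫ ω in Z ⁻¹' B, (fun b => -M b) (Z ω) ∂Q ≤ ∫ ω, ‖Y ω‖ ∂Q := by
    intro B hB
    have : ∫ ω in Z ⁻¹' B, (fun b => -M b) (Z ω) ∂Q = - ∫ ω in Z ⁻¹' B, M (Z ω) ∂Q := by
      simp [integral_neg]
    rw [this, ← hver B hB]
    calc -∫ ω in Z ⁻¹' B, Y ω ∂Q = ∫ ω in Z ⁻¹' B, -Y ω ∂Q := by rw [integral_neg]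
      _ ≤ ∫ ω in Z ⁻¹' B, ‖Y ω‖ ∂Q := by
          refine integral_mono_ae hYint.neg.restrict hYint.norm.restrict ?_
          filter_upwards with ω using neg_le_abs _
      _ ≤ ∫ ω, ‖Y ω‖ ∂Q :=
          setIntegral_le_integral hYint.norm (by filter_upwards with ω using norm_nonneg _)
  have h1 := haux M hM hb1
  have h2 := haux (fun b => -M b) hM.neg hb2
  refine ⟨(hM.comp hZ).aestronglyMeasurable, ?_⟩
  rw [hasFiniteIntegral_iff_norm]
  have hpt : ∀ ω, ENNReal.ofReal ‖M (Z ω)‖ ≤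
      ENNReal.ofReal (M (Z ω)) + ENNReal.ofReal (-M (Z ω)) := by
    intro ω
    rcases le_total 0 (M (Z ω)) with h | h
    · simp [Real.norm_eq_abs, abs_of_nonneg h]
    · simp [Real.norm_eq_abs, abs_of_nonpos h]
  calc ∫⁻ ω, ENNReal.ofReal ‖M (Z ω)‖ ∂Q
      ≤ ∫⁻ ω, (ENNReal.ofReal (M (Z ω)) + ENNReal.ofReal (-M (Z ω))) ∂Q :=
        lintegral_mono hpt
    _ = ∫⁻ ω, ENNReal.ofReal (M (Z ω)) ∂Q + ∫⁻ ω, ENNReal.ofReal (-M (Z ω)) ∂Q :=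
        lintegral_add_left ((hM.comp hZ).ennreal_ofReal) _
    _ ≤ ENNReal.ofReal (∫ ω, ‖Y ω‖ ∂Q) + ENNReal.ofReal (∫ ω, ‖Y ω‖ ∂Q) :=
        add_le_add h1 h2
    _ < ⊤ := by
        exact ENNReal.add_lt_top.mpr ⟨ENNReal.ofReal_lt_top, ENNReal.ofReal_lt_top⟩

/-- Core identification step for one arm. -/
lemma case_aux
    {Ω α γ : Type*} {mα : MeasurableSpace α} {mγ : MeasurableSpace γ}
    [mΩ : MeasurableSpace Ω] [StandardBorelSpace Ω] [Nonempty Ω]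
    (μ : Measure Ω) [IsProbabilityMeasure μ]
    {X : Ω → α} (hX : Measurable X) {T : Ω → ℝ} (hT : Measurable T)
    {W : Ω → γ} (hW : Measurable W) {V : Ω → ℝ} (hV : Measurable V)
    (hVW : Measurable[mγ.comap W] V)
    (hind : CondIndepFun (mα.comap X) hX.comap_le T W μ)
    (hVint : Integrable V μ)
    (tval : ℝ)
    {q : α → ℝ} (hq : Measurable q)
    (hq_ver : ∀ B : Set α, MeasurableSet B →
      ∫ ω in X ⁻¹' B, (T ⁻¹' {tval}).indicator (fun _ => (1:ℝ)) ω ∂μ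
        = ∫ ω in X ⁻¹' B, q (X ω) ∂μ)
    {ε : ℝ} (hε : 0 < ε) (hq_bdd : ∀ ω, ε ≤ q (X ω) ∧ q (X ω) ≤ 1)
    {M : α → ℝ} (hM : Measurable M)
    (hMind : Integrable ((T ⁻¹' {tval}).indicator (fun ω => M (X ω))) μ)
    (hkey : ∀ B : Set α, MeasurableSet B →
      ∫ ω in X ⁻¹' B ∩ T ⁻¹' {tval}, V ω ∂μ
        = ∫ ω in X ⁻¹' B ∩ T ⁻¹' {tval}, M (X ω) ∂μ) :
    Integrable (fun ω => M (X ω)) μ ∧ ∫ ω, V ω ∂μ = ∫ ω, M (X ω) ∂μ := by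
  have hm : mα.comap X ≤ mΩ := hX.comap_le
  have hmW : mγ.comap W ≤ mΩ := hW.comap_le
  have hm₂ : mα.comap X ⊔ mγ.comap W ≤ mΩ := sup_le hm hmW
  have hAm : MeasurableSet (T ⁻¹' {tval}) := hT (measurableSet_singleton tval)
  set χ : Ω → ℝ := (T ⁻¹' {tval}).indicator (fun _ => (1:ℝ)) with hχ_def
  have hχ_int : Integrable χ μ := (integrable_const (1:ℝ)).indicator hAm
  have hχ_meas : Measurable χ := measurable_const.indicator hAm
  have hXcm : Measurable[mα.comap X] X := Measurable.of_comap_le le_rfl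
  have hqX_m : Measurable[mα.comap X] (fun ω => q (X ω)) := hq.comp hXcm
  have hqX_sm : StronglyMeasurable[mα.comap X] (fun ω => q (X ω)) := hqX_m.stronglyMeasurable
  have hq_nonneg : ∀ ω, 0 ≤ q (X ω) := fun ω => le_trans hε.le (hq_bdd ω).1
  have hqX_int : Integrable (fun ω => q (X ω)) μ := by
    refine (integrable_const (1:ℝ)).mono' (hq.comp hX).aestronglyMeasurable ?_
    filter_upwards with ω
    rw [Real.norm_eq_abs, abs_of_nonneg (hq_nonneg ω)]
    exact (hq_bdd ω).2
  have hMXm : Measurable[mα.comap X] (fun ω => M (X ω)) := hM.comp hXcm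
  -- `q ∘ X` is a version of the conditional expectation of `χ` given `σ(X)`
  have hqver' : (fun ω => q (X ω)) =ᵐ[μ] μ[χ | mα.comap X] := by
    refine ae_eq_condExp_of_forall_setIntegral_eq hm hχ_int
      (fun s _ _ => hqX_int.integrableOn) (fun s hs _ => ?_)
      hqX_sm.aestronglyMeasurable
    obtain ⟨B, hB, rfl⟩ := MeasurableSpace.measurableSet_comap.mp hs
    exact (hq_ver B hB).symm
  -- doubling
  have hχm2 : μ[χ | mα.comap X ⊔ mγ.comap W] =ᵐ[μ] fun ω => q (X ω) :=
    (condexp_indicator_sup_comap μ hX hT hW hind (measurableSet_singleton tval)).trans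
      hqver'.symm
  -- Step 3
  have claim3 : ∀ B : Set α, MeasurableSet B →
      ∫ ω in X ⁻¹' B ∩ T ⁻¹' {tval}, V ω ∂μ = ∫ ω in X ⁻¹' B, V ω * q (X ω) ∂μ := by
    intro B hB
    have hBm : MeasurableSet (X ⁻¹' B) := hX hB
    have hBin : MeasurableSet[mα.comap X] (X ⁻¹' B) := ⟨B, hB, rfl⟩
    set F : Ω → ℝ := fun ω => (X ⁻¹' B).indicator (fun _ => (1:ℝ)) ω * V ω with hF_def
    have hBin₂ : MeasurableSet[mα.comap X ⊔ mγ.comap W] (X ⁻¹' B) :=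
      MeasurableSpace.le_def.mp le_sup_left _ hBin
    have hF_m : Measurable[mα.comap X ⊔ mγ.comap W] F :=
      (measurable_const.indicator hBin₂).mul (hVW.mono le_sup_right le_rfl)
    have hF_sm : StronglyMeasurable[mα.comap X ⊔ mγ.comap W] F := hF_m.stronglyMeasurable
    have hFχ_int : Integrable (fun ω => F ω * χ ω) μ := by
      refine hVint.abs.mono' ?_ ?_
      · exact (((measurable_const.indicator hBm).mul hV).mul hχ_meas).aestronglyMeasurable
      · filter_upwards with ω
        by_cases h1 : ω ∈ X ⁻¹' B <;> by_cases h2 : ω ∈ T ⁻¹' {tval} <;>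
          simp [hF_def, hχ_def, Set.indicator_apply, h1, h2, abs_nonneg]
    have eq1 : ∫ ω in X ⁻¹' B ∩ T ⁻¹' {tval}, V ω ∂μ = ∫ ω, F ω * χ ω ∂μ := by
      rw [← integral_indicator (hBm.inter hAm)]
      congr 1
      funext ω
      by_cases h1 : ω ∈ X ⁻¹' B <;> by_cases h2 : ω ∈ T ⁻¹' {tval} <;>
        simp [hF_def, hχ_def, Set.indicator_apply, h1, h2, Set.mem_inter_iff]
    have eq2 : ∫ ω, F ω * q (X ω) ∂μ = ∫ ω in X ⁻¹' B, V ω * q (X ω) ∂μ := by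
      rw [← integral_indicator hBm]
      congr 1
      funext ω
      by_cases h1 : ω ∈ X ⁻¹' B <;> simp [hF_def, Set.indicator_apply, h1]
    rw [eq1, integral_mul_condexp hm₂ μ hF_sm hFχ_int hχ_int, ← eq2]
    refine integral_congr_ae ?_
    filter_upwards [hχm2] with ω hω
    rw [hω]
  -- Step 4
  have claim4 : ∀ B : Set α, MeasurableSet B →
      ∫ ω in X ⁻¹' B ∩ T ⁻¹' {tval}, M (X ω) ∂μ
        = ∫ ω in X ⁻¹' B, M (X ω) * q (X ω) ∂μ := by
    intro B hB
    have hBm : MeasurableSet (X ⁻¹' B) := hX hB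
    have hBin : MeasurableSet[mα.comap X] (X ⁻¹' B) := ⟨B, hB, rfl⟩
    set F : Ω → ℝ := fun ω => (X ⁻¹' B).indicator (fun _ => (1:ℝ)) ω * M (X ω) with hF_def
    have hF_m : Measurable[mα.comap X] F := (measurable_const.indicator hBin).mul hMXm
    have hF_sm : StronglyMeasurable[mα.comap X] F := hF_m.stronglyMeasurable
    have hFχ_int : Integrable (fun ω => F ω * χ ω) μ := by
      refine hMind.abs.mono' ?_ ?_
      · exact (((measurable_const.indicator hBm).mul (hM.comp hX)).mul
          hχ_meas).aestronglyMeasurable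
      · filter_upwards with ω
        by_cases h1 : ω ∈ X ⁻¹' B <;> by_cases h2 : ω ∈ T ⁻¹' {tval} <;>
          simp [hF_def, hχ_def, Set.indicator_apply, h1, h2, abs_nonneg]
    have eq1 : ∫ ω in X ⁻¹' B ∩ T ⁻¹' {tval}, M (X ω) ∂μ = ∫ ω, F ω * χ ω ∂μ := by
      rw [← integral_indicator (hBm.inter hAm)]
      congr 1
      funext ω
      by_cases h1 : ω ∈ X ⁻¹' B <;> by_cases h2 : ω ∈ T ⁻¹' {tval} <;>
        simp [hF_def, hχ_def, Set.indicator_apply, h1, h2, Set.mem_inter_iff]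
    have eq2 : ∫ ω, F ω * q (X ω) ∂μ = ∫ ω in X ⁻¹' B, M (X ω) * q (X ω) ∂μ := by
      rw [← integral_indicator hBm]
      congr 1
      funext ω
      by_cases h1 : ω ∈ X ⁻¹' B <;> simp [hF_def, Set.indicator_apply, h1]
    rw [eq1, integral_mul_condexp hm μ hF_sm hFχ_int hχ_int, ← eq2]
    refine integral_congr_ae ?_
    filter_upwards [hqver'] with ω hω
    rw [← hω]
  -- integrability of `(M ∘ X) * (q ∘ X)`
  have hMχ_int : Integrable (fun ω => M (X ω) * χ ω) μ := by
    have : (fun ω => M (X ω) * χ ω)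
        = (T ⁻¹' {tval}).indicator (fun ω => M (X ω)) := by
      funext ω
      by_cases h2 : ω ∈ T ⁻¹' {tval} <;> simp [hχ_def, Set.indicator_apply, h2]
    rw [this]
    exact hMind
  have hMq_cond : μ[(fun ω => M (X ω) * χ ω) | mα.comap X]
      =ᵐ[μ] fun ω => M (X ω) * q (X ω) := by
    refine (condExp_mul_of_stronglyMeasurable_left hMXm.stronglyMeasurable hMχ_int hχ_int).trans ?_
    filter_upwards [hqver'] with ω hω
    simp only [Pi.mul_apply]
    rw [← hω]
  have hMq_int : Integrable (fun ω => M (X ω) * q (X ω)) μ :=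
    integrable_condExp.congr hMq_cond
  have hMX_int : Integrable (fun ω => M (X ω)) μ := by
    refine (hMq_int.norm.const_mul ε⁻¹).mono' (hM.comp hX).aestronglyMeasurable ?_
    filter_upwards with ω
    rw [Real.norm_eq_abs, Real.norm_eq_abs, abs_mul, abs_of_nonneg (hq_nonneg ω)]
    rw [← mul_le_mul_iff_of_pos_left hε]
    calc ε * |M (X ω)| ≤ q (X ω) * |M (X ω)| :=
          mul_le_mul_of_nonneg_right (hq_bdd ω).1 (abs_nonneg _)
      _ = |M (X ω)| * q (X ω) := mul_comm _ _
      _ ≤ ε * (ε⁻¹ * (|M (X ω)| * q (X ω))) := by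
          rw [← mul_assoc, mul_inv_cancel₀ hε.ne', one_mul]
  -- Step 6
  have hVq_int : Integrable (fun ω => V ω * q (X ω)) μ := by
    refine hVint.abs.mono' (hV.mul (hq.comp hX)).aestronglyMeasurable ?_
    filter_upwards with ω
    rw [Real.norm_eq_abs, abs_mul, abs_of_nonneg (hq_nonneg ω)]
    calc |V ω| * q (X ω) ≤ |V ω| * 1 :=
          mul_le_mul_of_nonneg_left (hq_bdd ω).2 (abs_nonneg _)
      _ = |V ω| := mul_one _
  have hstep6 : (fun ω => M (X ω) * q (X ω)) =ᵐ[μ] μ[(fun ω => V ω * q (X ω)) | mα.comap X] := by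
    refine ae_eq_condExp_of_forall_setIntegral_eq hm hVq_int
      (fun s _ _ => hMq_int.integrableOn) (fun s hs _ => ?_)
      (hMXm.mul hqX_m).stronglyMeasurable.aestronglyMeasurable
    obtain ⟨B, hB, rfl⟩ := MeasurableSpace.measurableSet_comap.mp hs
    rw [← claim4 B hB, ← hkey B hB, claim3 B hB]
  have hpull : μ[(fun ω => V ω * q (X ω)) | mα.comap X]
      =ᵐ[μ] fun ω => q (X ω) * (μ[V | mα.comap X]) ω := by
    have heq : (fun ω => V ω * q (X ω)) = fun ω => q (X ω) * V ω := by
      funext ω; rw [mul_comm]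
    rw [heq]
    have hqV_int : Integrable (fun ω => q (X ω) * V ω) μ := by
      refine hVint.abs.mono' ((hq.comp hX).mul hV).aestronglyMeasurable ?_
      filter_upwards with ω
      rw [Real.norm_eq_abs, abs_mul, abs_of_nonneg (hq_nonneg ω)]
      calc q (X ω) * |V ω| ≤ 1 * |V ω| :=
            mul_le_mul_of_nonneg_right (hq_bdd ω).2 (abs_nonneg _)
        _ = |V ω| := one_mul _
    exact condExp_mul_of_stronglyMeasurable_left hqX_sm hqV_int hVint
  have hfinal : (fun ω => M (X ω)) =ᵐ[μ] μ[V | mα.comap X] := by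
    filter_upwards [hstep6.trans hpull] with ω hω
    have hq0 : q (X ω) ≠ 0 := (lt_of_lt_of_le hε (hq_bdd ω).1).ne'
    rw [mul_comm (q (X ω))] at hω
    exact mul_right_cancel₀ hq0 hω
  refine ⟨hMX_int, ?_⟩
  rw [integral_congr_ae hfinal]
  exact (integral_condExp hm).symm

/-- **Proposition 1 (identification).** Under internal validity of the RCT
(`T ⊥ (Y(t), S(t)) | X, G=1`), strict overlap, and mean exchangeability
(`E[Y | X, S, T, G=1] = E[Y | X, S, T, G=0]`, expressed by saying that the function
`h(x,s,t) = E[Y | X=x, S=s, T=t, G=0]`, computable from the observational data, is also a version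
of `E[Y | X, S, T, G=1]`), the average treatment effect in the RCT
`τ = E[Y(1) - Y(0) | G=1]` is identified as
`τ = E[ E{h(X,S,T) | X, T=1, G=1} - E{h(X,S,T) | X, T=0, G=1} | G=1 ]`. -/
theorem ate_identification
    {Ω : Type*} [MeasurableSpace Ω] [StandardBorelSpace Ω] [Nonempty Ω]
    {α β : Type*} [mα : MeasurableSpace α] [mβ : MeasurableSpace β]
    (P : Measure Ω) [IsProbabilityMeasure P]
    (X : Ω → α) (S0 S1 : Ω → β) (T G Y0 Y1 : Ω → ℝ)
    (S : Ω → β) (Y : Ω → ℝ)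
    (hScons : ∀ ω, S ω = if T ω = 1 then S1 ω else S0 ω)
    (hYcons : ∀ ω, Y ω = if T ω = 1 then Y1 ω else Y0 ω)
    (hX : Measurable X) (hS0 : Measurable S0) (hS1 : Measurable S1)
    (hT : Measurable T) (hG : Measurable G) (hY0 : Measurable Y0) (hY1 : Measurable Y1)
    (hTbin : ∀ ω, T ω = 0 ∨ T ω = 1) (hGbin : ∀ ω, G ω = 0 ∨ G ω = 1)
    (hpos : ∀ tv gv : ℝ, tv ∈ ({0, 1} : Set ℝ) → gv ∈ ({0, 1} : Set ℝ) →
      P ({ω | T ω = tv} ∩ G ⁻¹' {gv}) ≠ 0)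
    (hY0int : Integrable Y0 P) (hY1int : Integrable Y1 P)
    -- Assumption 1 (internal validity): `T ⊥ (Y(t), S(t)) | X` within `G = 1`
    (hiv0 : CondIndepFun (MeasurableSpace.comap X mα) hX.comap_le
      T (fun ω => (Y0 ω, S0 ω)) (P[|G ⁻¹' {1}]))
    (hiv1 : CondIndepFun (MeasurableSpace.comap X mα) hX.comap_le
      T (fun ω => (Y1 ω, S1 ω)) (P[|G ⁻¹' {1}]))
    -- Assumption 2 (strict overlap)
    (ε : ℝ) (hε : 0 < ε) (hε' : ε < 1 / 2)
    (e : α → ℝ) (he : Measurable e)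
    (he_ver : IsCondMean (P[|G ⁻¹' {1}]) X T e)  -- `e(x) = P(T=1 | X=x, G=1)`
    (he_bdd : ∀ ω, ε ≤ e (X ω) ∧ e (X ω) ≤ 1 - ε)
    (π0 : α × β → ℝ) (hπ0 : Measurable π0)
    (hπ0_ver : IsCondMean P (fun ω => (X ω, S ω)) (fun ω => 1 - G ω) π0)
      -- `π0(x,s) = P(G=0 | X=x, S=s)`
    (hπ0_bdd : ∀ᵐ ω ∂(P[|G ⁻¹' {1}]), ε ≤ π0 (X ω, S ω))
    -- Assumption 3 (mean exchangeability): `h(x,s,t) = E[Y | X=x, S=s, T=t, G=0]` is also a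
    -- version of `E[Y | X, S, T, G=1]`
    (h : α × β × ℝ → ℝ) (hh : Measurable h)
    (hh0 : IsCondMean (P[|G ⁻¹' {0}]) (fun ω => (X ω, S ω, T ω)) Y h)
    (hh1 : IsCondMean (P[|G ⁻¹' {1}]) (fun ω => (X ω, S ω, T ω)) Y h)
    (hhint : Integrable (fun ω => h (X ω, S ω, T ω)) (P[|G ⁻¹' {1}]))
    -- `m_t(x) = E[h(X,S,T) | X=x, T=t, G=1]`
    (m1 m0 : α → ℝ) (hm1 : Measurable m1) (hm0 : Measurable m0)
    (hm1_ver : IsCondMean (P[|{ω | T ω = 1} ∩ G ⁻¹' {1}]) X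
      (fun ω => h (X ω, S ω, T ω)) m1)
    (hm0_ver : IsCondMean (P[|{ω | T ω = 0} ∩ G ⁻¹' {1}]) X
      (fun ω => h (X ω, S ω, T ω)) m0)
    (hmint : Integrable (fun ω => m1 (X ω) - m0 (X ω)) (P[|G ⁻¹' {1}])) :
    ∫ ω, (Y1 ω - Y0 ω) ∂(P[|G ⁻¹' {1}])
      = ∫ ω, (m1 (X ω) - m0 (X ω)) ∂(P[|G ⁻¹' {1}]) := by
  have hG1 : MeasurableSet (G ⁻¹' {(1:ℝ)}) := hG (measurableSet_singleton 1)
  have hPG1 : P (G ⁻¹' {(1:ℝ)}) ≠ 0 := by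
    have h11 := hpos 1 1 (by simp) (by simp)
    intro h0
    exact h11 (measure_mono_null Set.inter_subset_right h0)
  set μ : Measure Ω := P[|G ⁻¹' {1}] with hμ_def
  haveI : IsProbabilityMeasure μ := cond_isProbabilityMeasure hPG1
  have htrans : ∀ {f : Ω → ℝ}, Integrable f P → Integrable f μ := by
    intro f hf
    have : μ = (P (G ⁻¹' {1}))⁻¹ • P.restrict (G ⁻¹' {1}) := rfl
    rw [this]
    exact (hf.restrict).smul_measure (ENNReal.inv_ne_top.mpr hPG1)
  have hY1μ : Integrable Y1 μ := htrans hY1int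
  have hY0μ : Integrable Y0 μ := htrans hY0int
  -- generic one-arm treatment
  have harm : ∀ (tval : ℝ), tval ∈ ({0, 1} : Set ℝ) →
      ∀ (m' : α → ℝ), Measurable m' →
      IsCondMean (P[|{ω | T ω = tval} ∩ G ⁻¹' {1}]) X (fun ω => h (X ω, S ω, T ω)) m' →
      (∀ B : Set α, MeasurableSet B →
        ∫ ω in X ⁻¹' B ∩ T ⁻¹' {tval}, Y ω ∂μ
          = ∫ ω in X ⁻¹' B ∩ T ⁻¹' {tval}, h (X ω, S ω, T ω) ∂μ) →
      (Integrable ((T ⁻¹' {tval}).indicator (fun ω => m' (X ω))) μ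
        ∧ ∀ B : Set α, MeasurableSet B →
          ∫ ω in X ⁻¹' B ∩ T ⁻¹' {tval}, Y ω ∂μ
            = ∫ ω in X ⁻¹' B ∩ T ⁻¹' {tval}, m' (X ω) ∂μ) := by
    intro tval htval m' hm' hver hYh
    have hAm : MeasurableSet (T ⁻¹' {tval}) := hT (measurableSet_singleton tval)
    have hseteq : {ω | T ω = tval} = T ⁻¹' {tval} := by ext ω; simp
    have hPA : P ({ω | T ω = tval} ∩ G ⁻¹' {1}) ≠ 0 := hpos tval 1 htval (by simp)
    have hQeq : P[|{ω | T ω = tval} ∩ G ⁻¹' {1}] = μ[|T ⁻¹' {tval}] := by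
      rw [cond_cond_eq_cond_inter hG1 hAm, Set.inter_comm, hseteq]
    have hμA : μ (T ⁻¹' {tval}) ≠ 0 := by
      rw [cond_apply hG1]
      refine mul_ne_zero (ENNReal.inv_ne_zero.mpr (measure_ne_top P _)) ?_
      rwa [Set.inter_comm, hseteq] at hPA
    have hQ_def : (μ[|T ⁻¹' {tval}]) = (μ (T ⁻¹' {tval}))⁻¹ • μ.restrict (T ⁻¹' {tval}) := rfl
    -- rescaling of set integrals
    have hrs : ∀ (f : Ω → ℝ) (B : Set α), MeasurableSet B →
        ∫ ω in X ⁻¹' B, f ω ∂(μ[|T ⁻¹' {tval}])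
          = (μ (T ⁻¹' {tval}))⁻¹.toReal * ∫ ω in X ⁻¹' B ∩ T ⁻¹' {tval}, f ω ∂μ := by
      intro f B hB
      rw [hQ_def, Measure.restrict_smul, integral_smul_measure,
        Measure.restrict_restrict (hX hB)]
      rfl
    have hc_ne : (μ (T ⁻¹' {tval}))⁻¹.toReal ≠ 0 := by
      refine ENNReal.toReal_ne_zero.mpr ⟨ENNReal.inv_ne_zero.mpr (measure_ne_top μ _),
        ENNReal.inv_ne_top.mpr hμA⟩
    have hver' : ∀ B : Set α, MeasurableSet B →
        ∫ ω in X ⁻¹' B ∩ T ⁻¹' {tval}, h (X ω, S ω, T ω) ∂μ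
          = ∫ ω in X ⁻¹' B ∩ T ⁻¹' {tval}, m' (X ω) ∂μ := by
      intro B hB
      have := hver B hB
      rw [hQeq, hrs _ B hB, hrs _ B hB] at this
      exact mul_left_cancel₀ hc_ne this
    constructor
    · -- integrability of the indicator
      have hhQ : Integrable (fun ω => h (X ω, S ω, T ω)) (μ[|T ⁻¹' {tval}]) := by
        rw [hQ_def]
        exact (hhint.restrict).smul_measure (ENNReal.inv_ne_top.mpr hμA)
      have hverQ : IsCondMean (μ[|T ⁻¹' {tval}]) X (fun ω => h (X ω, S ω, T ω)) m' := by
        rw [← hQeq]; exact hver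
      have hint := integrable_of_isCondMean (μ[|T ⁻¹' {tval}]) hX hhQ hm' hverQ
      rw [hQ_def] at hint
      have hint' : Integrable (fun ω => m' (X ω)) (μ.restrict (T ⁻¹' {tval})) :=
        (integrable_smul_measure (ENNReal.inv_ne_zero.mpr (measure_ne_top μ _))
          (ENNReal.inv_ne_top.mpr hμA)).mp hint
      exact (integrable_indicator_iff hAm).mpr hint'
    · intro B hB
      rw [hYh B hB]
      exact hver' B hB
  -- consistency: Y agrees with Y1 on {T = 1} and with Y0 on {T = 0}
  have hA1m : MeasurableSet (T ⁻¹' {(1:ℝ)}) := hT (measurableSet_singleton 1)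
  have hA0m : MeasurableSet (T ⁻¹' {(0:ℝ)}) := hT (measurableSet_singleton 0)
  have hYh : ∀ tval : ℝ, ∀ B : Set α, MeasurableSet B →
      ∫ ω in X ⁻¹' B ∩ T ⁻¹' {tval}, Y ω ∂μ
        = ∫ ω in X ⁻¹' B ∩ T ⁻¹' {tval}, h (X ω, S ω, T ω) ∂μ := by
    intro tval B hB
    have hBp : MeasurableSet (B ×ˢ (Set.univ : Set β) ×ˢ ({tval} : Set ℝ)) :=
      hB.prod (MeasurableSet.univ.prod (measurableSet_singleton _))
    have hpre : (fun ω => (X ω, S ω, T ω)) ⁻¹' (B ×ˢ (Set.univ : Set β) ×ˢ ({tval} : Set ℝ))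
        = X ⁻¹' B ∩ T ⁻¹' {tval} := by
      ext ω; simp [Set.mem_prod, eq_comm]
    have := hh1 _ hBp
    rwa [hpre] at this
  obtain ⟨hMind1, hkeyY1⟩ := harm 1 (by simp) m1 hm1 hm1_ver (hYh 1)
  obtain ⟨hMind0, hkeyY0⟩ := harm 0 (by simp) m0 hm0 hm0_ver (hYh 0)
  have key1 : ∀ B : Set α, MeasurableSet B →
      ∫ ω in X ⁻¹' B ∩ T ⁻¹' {(1:ℝ)}, Y1 ω ∂μ
        = ∫ ω in X ⁻¹' B ∩ T ⁻¹' {(1:ℝ)}, m1 (X ω) ∂μ := by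
    intro B hB
    have hEq : Set.EqOn Y1 Y (X ⁻¹' B ∩ T ⁻¹' {(1:ℝ)}) := by
      intro ω hω
      have ht1 : T ω = 1 := hω.2
      rw [hYcons ω, if_pos ht1]
    rw [setIntegral_congr_fun ((hX hB).inter hA1m) hEq, hkeyY1 B hB]
  have key0 : ∀ B : Set α, MeasurableSet B →
      ∫ ω in X ⁻¹' B ∩ T ⁻¹' {(0:ℝ)}, Y0 ω ∂μ
        = ∫ ω in X ⁻¹' B ∩ T ⁻¹' {(0:ℝ)}, m0 (X ω) ∂μ := by
    intro B hB
    have hEq : Set.EqOn Y0 Y (X ⁻¹' B ∩ T ⁻¹' {(0:ℝ)}) := by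
      intro ω hω
      have ht0 : T ω = 0 := hω.2
      rw [hYcons ω, if_neg (by rw [ht0]; norm_num)]
    rw [setIntegral_congr_fun ((hX hB).inter hA0m) hEq, hkeyY0 B hB]
  -- propensity versions
  have hχT1 : (T ⁻¹' {(1:ℝ)}).indicator (fun _ => (1:ℝ)) = T := by
    funext ω
    rcases hTbin ω with h0 | h1
    · rw [Set.indicator_of_notMem (by simp [h0]), h0]
    · rw [Set.indicator_of_mem (by simp [h1]), h1]
  have hχT0 : (T ⁻¹' {(0:ℝ)}).indicator (fun _ => (1:ℝ)) = fun ω => 1 - T ω := by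
    funext ω
    rcases hTbin ω with h0 | h1
    · rw [Set.indicator_of_mem (by simp [h0]), h0]; norm_num
    · rw [Set.indicator_of_notMem (by simp [h1]), h1]; norm_num
  have hTμ_int : Integrable T μ := by
    refine (integrable_const (1:ℝ)).mono' hT.aestronglyMeasurable ?_
    filter_upwards with ω
    rcases hTbin ω with h0 | h0 <;> simp [h0]
  have heX_int : Integrable (fun ω => e (X ω)) μ := by
    refine (integrable_const (1:ℝ)).mono' (he.comp hX).aestronglyMeasurable ?_
    filter_upwards with ω
    rw [Real.norm_eq_abs, abs_of_nonneg (le_trans hε.le (he_bdd ω).1)]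
    linarith [(he_bdd ω).2]
  have hq_ver1 : ∀ B : Set α, MeasurableSet B →
      ∫ ω in X ⁻¹' B, (T ⁻¹' {(1:ℝ)}).indicator (fun _ => (1:ℝ)) ω ∂μ
        = ∫ ω in X ⁻¹' B, e (X ω) ∂μ := by
    intro B hB
    rw [hχT1]
    exact he_ver B hB
  have hq_ver0 : ∀ B : Set α, MeasurableSet B →
      ∫ ω in X ⁻¹' B, (T ⁻¹' {(0:ℝ)}).indicator (fun _ => (1:ℝ)) ω ∂μ
        = ∫ ω in X ⁻¹' B, (1 - e (X ω)) ∂μ := by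
    intro B hB
    rw [hχT0]
    rw [integral_sub (integrable_const (1:ℝ)).integrableOn hTμ_int.integrableOn,
      he_ver B hB,
      ← integral_sub (integrable_const (1:ℝ)).integrableOn heX_int.integrableOn]
  have hq_bdd1 : ∀ ω, ε ≤ e (X ω) ∧ e (X ω) ≤ 1 := by
    intro ω
    exact ⟨(he_bdd ω).1, by linarith [(he_bdd ω).2]⟩
  have hq_bdd0 : ∀ ω, ε ≤ 1 - e (X ω) ∧ 1 - e (X ω) ≤ 1 := by
    intro ω
    exact ⟨by linarith [(he_bdd ω).2], by linarith [(he_bdd ω).1]⟩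
  -- conditional independence, packaged
  have hW1 : Measurable (fun ω => (Y1 ω, S1 ω)) := hY1.prodMk hS1
  have hW0 : Measurable (fun ω => (Y0 ω, S0 ω)) := hY0.prodMk hS0
  have hVW1 : Measurable[MeasurableSpace.comap (fun ω => (Y1 ω, S1 ω)) inferInstance] Y1 :=
    measurable_fst.comp (Measurable.of_comap_le le_rfl)
  have hVW0 : Measurable[MeasurableSpace.comap (fun ω => (Y0 ω, S0 ω)) inferInstance] Y0 :=
    measurable_fst.comp (Measurable.of_comap_le le_rfl)
  obtain ⟨hm1X_int, hint1⟩ := case_aux μ hX hT hW1 hY1 hVW1 hiv1 hY1μ 1 he hq_ver1 hε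
    hq_bdd1 hm1 hMind1 key1
  obtain ⟨hm0X_int, hint0⟩ := case_aux μ hX hT hW0 hY0 hVW0 hiv0 hY0μ 0
    (measurable_const.sub he) hq_ver0 hε hq_bdd0 hm0 hMind0 key0
  rw [integral_sub hY1μ hY0μ, hint1, hint0, ← integral_sub hm1X_int hm0X_int]
end

section
/- Any mean-zero square-integrable function h(T,X,S,Y,G) of the observed data, where T, G are binary and Y is only observed when G=0, decomposes as h = GT·S₁(S|X) + G(1-T)·S₀(S|X) + G(T-e(X))a(X) + (G-π(X))b(X) + (1-G)T[S_Y¹ + S_S¹] + (1-G)(1-T)[S_Y⁰ + S_S⁰] + (1-G)(T-p(X))c(X) + S_X(X), where each component has the appropriate zero conditional mean: E[S_t(S|X)|X,T=t,G=1]=0, E[S_Y^t|X,S,T=t,G=0]=0, E[S_S^t|X,T=t,G=0]=0, E[S_X(X)]=0. -/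
open MeasureTheory ProbabilityTheory

open scoped NNReal ENNReal

section AuxHelpers

variable {Ω γ α : Type*} [MeasurableSpace Ω] [MeasurableSpace γ] [MeasurableSpace α]



/-- RN-based conditional mean: for integrable `f` there is a measurable `m : γ → ℝ` with
`∫ m(Z) over Z⁻¹B = ∫ f over Z⁻¹B` for all measurable `B`, and `m ∘ Z` integrable. -/
lemma exists_condMeanFun (μ : Measure Ω) [IsFiniteMeasure μ]
    (Z : Ω → γ) (hZ : Measurable Z) (f : Ω → ℝ) (hf : Integrable f μ) :
    ∃ m : γ → ℝ, Measurable m ∧ Integrable (fun ω => m (Z ω)) μ ∧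
      ∀ B : Set γ, MeasurableSet B →
        ∫ ω in Z ⁻¹' B, m (Z ω) ∂μ = ∫ ω in Z ⁻¹' B, f ω ∂μ := by
  set ν : Measure γ := μ.map Z with hν
  set νp : Measure γ := (μ.withDensity (fun ω => ENNReal.ofReal (f ω))).map Z with hνp
  set νn : Measure γ := (μ.withDensity (fun ω => ENNReal.ofReal (-f ω))).map Z with hνn
  have hfin : ∀ g : Ω → ℝ, Integrable g μ →
      IsFiniteMeasure ((μ.withDensity (fun ω => ENNReal.ofReal (g ω))).map Z) := by
    intro g hg
    constructor
    rw [Measure.map_apply hZ MeasurableSet.univ, Set.preimage_univ, withDensity_apply _ MeasurableSet.univ,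
      Measure.restrict_univ]
    calc ∫⁻ ω, ENNReal.ofReal (g ω) ∂μ ≤ ∫⁻ ω, ‖g ω‖ₑ ∂μ :=
          lintegral_mono fun ω => Real.ofReal_le_enorm _
      _ < ⊤ := hg.2
  haveI : IsFiniteMeasure νp := hfin f hf
  haveI : IsFiniteMeasure νn := hfin (-f) hf.neg
  haveI : IsFiniteMeasure ν := by
    constructor
    rw [hν, Measure.map_apply hZ MeasurableSet.univ]
    exact measure_lt_top _ _
  have hacp : νp ≪ ν := (withDensity_absolutelyContinuous μ _).map hZ
  have hacn : νn ≪ ν := (withDensity_absolutelyContinuous μ _).map hZ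
  refine ⟨fun x => (νp.rnDeriv ν x).toReal - (νn.rnDeriv ν x).toReal,
    (Measure.measurable_rnDeriv _ _).ennreal_toReal.sub
      (Measure.measurable_rnDeriv _ _).ennreal_toReal, ?_, ?_⟩
  · have h1 : Integrable (fun x => (νp.rnDeriv ν x).toReal - (νn.rnDeriv ν x).toReal) ν :=
      (Measure.integrable_toReal_rnDeriv).sub (Measure.integrable_toReal_rnDeriv)
    exact (integrable_map_measure h1.aestronglyMeasurable hZ.aemeasurable).mp h1
  · intro B hB
    have hmm : AEStronglyMeasurable
        (fun x => (νp.rnDeriv ν x).toReal - (νn.rnDeriv ν x).toReal) ν :=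
      ((Measure.measurable_rnDeriv _ _).ennreal_toReal.sub
        (Measure.measurable_rnDeriv _ _).ennreal_toReal).aestronglyMeasurable
    rw [← setIntegral_map hB hmm hZ.aemeasurable]
    rw [integral_sub (Measure.integrable_toReal_rnDeriv.restrict)
      (Measure.integrable_toReal_rnDeriv.restrict),
      Measure.setIntegral_toReal_rnDeriv hacp B, Measure.setIntegral_toReal_rnDeriv hacn B]
    rw [integral_eq_lintegral_pos_part_sub_lintegral_neg_part (hf.restrict)]
    congr 1
    · rw [hνp, measureReal_def, Measure.map_apply hZ hB, withDensity_apply _ (hZ hB)]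
    · rw [hνn, measureReal_def, Measure.map_apply hZ hB, withDensity_apply _ (hZ hB)]



/-- If `g(X)` is a version of the conditional probability of `u` given `X`, then the
pushforward of `μ.restrict u` under `X` has density `g` w.r.t. the pushforward of `μ`. -/
lemma map_restrict_eq_withDensity (μ : Measure Ω) [IsFiniteMeasure μ]
    (X : Ω → α) (hX : Measurable X) (u : Set Ω) (hu : MeasurableSet u)
    (g : α → ℝ) (hg : Measurable g) (hg0 : ∀ x, 0 ≤ g x) (hg1 : ∀ x, g x ≤ 1)
    (hid : ∀ B : Set α, MeasurableSet B →
      (μ (X ⁻¹' B ∩ u)).toReal = ∫ ω in X ⁻¹' B, g (X ω) ∂μ) :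
    (μ.restrict u).map X = (μ.map X).withDensity (fun x => ENNReal.ofReal (g x)) := by
  ext B hB
  rw [Measure.map_apply hX hB, Measure.restrict_apply (hX hB),
    withDensity_apply _ hB]
  have hint : IntegrableOn g B (μ.map X) := by
    haveI : IsFiniteMeasure (μ.map X) := by
      constructor
      rw [Measure.map_apply hX MeasurableSet.univ]
      exact measure_lt_top _ _
    refine Integrable.restrict ?_
    refine (integrable_const (1:ℝ)).mono' hg.aestronglyMeasurable
      (Filter.Eventually.of_forall fun x => ?_)
    rw [Real.norm_eq_abs, abs_of_nonneg (hg0 x)]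
    exact hg1 x
  rw [← ofReal_integral_eq_lintegral_ofReal hint
    (Filter.Eventually.of_forall fun x => hg0 x)]
  rw [setIntegral_map hB hg.aestronglyMeasurable hX.aemeasurable, ← hid B hB,
    ENNReal.ofReal_toReal (measure_ne_top _ _)]

lemma integral_mul_of_map_restrict (μ : Measure Ω)
    (X : Ω → α) (hX : Measurable X) (u : Set Ω)
    (g : α → ℝ) (hg : Measurable g) (hg0 : ∀ x, 0 ≤ g x)
    (hmap : (μ.restrict u).map X
        = (μ.map X).withDensity (fun x => ENNReal.ofReal (g x)))
    (k : α → ℝ) (hk : Measurable k) :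
    ∫ ω in u, k (X ω) ∂μ = ∫ ω, g (X ω) * k (X ω) ∂μ := by
  have h1 : ∫ ω in u, k (X ω) ∂μ = ∫ x, k x ∂((μ.restrict u).map X) :=
    (integral_map hX.aemeasurable hk.aestronglyMeasurable).symm
  rw [h1, hmap]
  have h2 : (fun x => ENNReal.ofReal (g x)) = fun x => ((Real.toNNReal (g x) : ℝ≥0) : ℝ≥0∞) :=
    rfl
  rw [h2, integral_withDensity_eq_integral_smul hg.real_toNNReal]
  have h3 : (fun x => Real.toNNReal (g x) • k x) = fun x => g x * k x := by
    funext x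
    rw [NNReal.smul_def, Real.coe_toNNReal _ (hg0 x), smul_eq_mul]
  rw [h3, integral_map (f := fun x => g x * k x) hX.aemeasurable
    (hg.mul hk).aestronglyMeasurable]

lemma integrable_mul_iff_of_map_restrict (μ : Measure Ω)
    (X : Ω → α) (hX : Measurable X) (u : Set Ω)
    (g : α → ℝ) (hg : Measurable g) (hg0 : ∀ x, 0 ≤ g x)
    (hmap : (μ.restrict u).map X
        = (μ.map X).withDensity (fun x => ENNReal.ofReal (g x)))
    (k : α → ℝ) (hk : Measurable k) :
    Integrable (fun ω => g (X ω) * k (X ω)) μ ↔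
      IntegrableOn (fun ω => k (X ω)) u μ := by
  have h2 : (fun x => ENNReal.ofReal (g x)) = fun x => ((Real.toNNReal (g x) : ℝ≥0) : ℝ≥0∞) :=
    rfl
  have h3 : (fun x => Real.toNNReal (g x) • k x) = fun x => g x * k x := by
    funext x
    rw [NNReal.smul_def, Real.coe_toNNReal _ (hg0 x), smul_eq_mul]
  calc Integrable (fun ω => g (X ω) * k (X ω)) μ
      ↔ Integrable (fun x => g x * k x) (μ.map X) :=
        (integrable_map_measure (hg.mul hk).aestronglyMeasurable hX.aemeasurable).symm
    _ ↔ Integrable k ((μ.map X).withDensity (fun x => ENNReal.ofReal (g x))) := by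
        rw [h2, ← h3]
        exact (integrable_withDensity_iff_integrable_smul hg.real_toNNReal).symm
    _ ↔ Integrable k ((μ.restrict u).map X) := by rw [hmap]
    _ ↔ IntegrableOn (fun ω => k (X ω)) u μ :=
        integrable_map_measure hk.aestronglyMeasurable hX.aemeasurable

lemma setIntegral_of_binary (μ : Measure Ω) (W : Ω → ℝ) (hW : Measurable W)
    (hbin : ∀ ω, W ω = 0 ∨ W ω = 1) (s : Set Ω) :
    ∫ ω in s, W ω ∂μ = (μ ({ω | W ω = 1} ∩ s)).toReal := by
  have h1 : ∀ ω, W ω = Set.indicator {ω | W ω = 1} (fun _ => (1:ℝ)) ω := by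
    intro ω
    rcases hbin ω with h | h <;> simp [Set.indicator_apply, h]
  calc ∫ ω in s, W ω ∂μ
      = ∫ ω in s, Set.indicator {ω | W ω = 1} (fun _ => (1:ℝ)) ω ∂μ :=
        integral_congr_ae (Filter.Eventually.of_forall fun ω => h1 ω)
    _ = ∫ _ω in s ∩ {ω | W ω = 1}, (1:ℝ) ∂μ :=
        setIntegral_indicator (hW (measurableSet_singleton 1))
    _ = (μ ({ω | W ω = 1} ∩ s)).toReal := by
        rw [setIntegral_const, smul_eq_mul, mul_one, Set.inter_comm, measureReal_def]


lemma binary_condMean_maps (μ : Measure Ω) [IsProbabilityMeasure μ]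
    (X : Ω → α) (hX : Measurable X)
    (W : Ω → ℝ) (hW : Measurable W) (hbin : ∀ ω, W ω = 0 ∨ W ω = 1)
    (g : α → ℝ) (hg : Measurable g) (hg0 : ∀ x, 0 ≤ g x) (hg1 : ∀ x, g x ≤ 1)
    (hver : IsCondMean μ X W g) :
    (μ.restrict {ω | W ω = 1}).map X
        = (μ.map X).withDensity (fun x => ENNReal.ofReal (g x)) ∧
      (μ.restrict {ω | W ω = 0}).map X
        = (μ.map X).withDensity (fun x => ENNReal.ofReal (1 - g x)) := by
  have mW1 : MeasurableSet {ω | W ω = 1} := hW (measurableSet_singleton 1)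
  have mW0 : MeasurableSet {ω | W ω = 0} := hW (measurableSet_singleton 0)
  have intg : Integrable (fun ω => g (X ω)) μ := by
    refine (integrable_const (1:ℝ)).mono' (hg.comp hX).aestronglyMeasurable
      (Filter.Eventually.of_forall fun ω => ?_)
    rw [Real.norm_eq_abs, abs_of_nonneg (hg0 _)]
    exact hg1 _
  have hid1 : ∀ B : Set α, MeasurableSet B →
      (μ (X ⁻¹' B ∩ {ω | W ω = 1})).toReal = ∫ ω in X ⁻¹' B, g (X ω) ∂μ := by
    intro B hB
    rw [← hver B hB, setIntegral_of_binary μ W hW hbin _, Set.inter_comm]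
  have h0c : {ω | W ω = 0} = {ω | W ω = 1}ᶜ := by
    ext ω
    rcases hbin ω with h | h <;> simp [h]
  refine ⟨map_restrict_eq_withDensity μ X hX _ mW1 g hg hg0 hg1 hid1,
    map_restrict_eq_withDensity μ X hX _ mW0 _ (measurable_const.sub hg)
      (fun x => by linarith [hg1 x]) (fun x => by linarith [hg0 x]) ?_⟩
  intro B hB
  have key : μ (X ⁻¹' B ∩ {ω | W ω = 1}) + μ (X ⁻¹' B ∩ {ω | W ω = 0}) = μ (X ⁻¹' B) := by
    rw [h0c, ← Set.diff_eq]
    exact measure_inter_add_diff _ mW1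
  have hfin1 : μ (X ⁻¹' B ∩ {ω | W ω = 1}) ≠ ⊤ := measure_ne_top _ _
  have hfin0 : μ (X ⁻¹' B ∩ {ω | W ω = 0}) ≠ ⊤ := measure_ne_top _ _
  have hkey : (μ (X ⁻¹' B ∩ {ω | W ω = 0})).toReal
      = (μ (X ⁻¹' B)).toReal - (μ (X ⁻¹' B ∩ {ω | W ω = 1})).toReal := by
    rw [← key, ENNReal.toReal_add hfin1 hfin0]
    ring
  rw [hkey, hid1 B hB]
  have : ∫ ω in X ⁻¹' B, (1 - g (X ω)) ∂μ
      = ∫ _ω in X ⁻¹' B, (1:ℝ) ∂μ - ∫ ω in X ⁻¹' B, g (X ω) ∂μ := by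
    rw [← integral_sub (integrable_const 1).integrableOn intg.integrableOn]
  rw [this, setIntegral_const, smul_eq_mul, mul_one, measureReal_def]

/-- Restriction to a set equals the scaled conditional measure. -/
lemma restrict_eq_smul_cond (μ : Measure Ω) [IsFiniteMeasure μ] (s : Set Ω)
    (hs0 : μ s ≠ 0) : μ.restrict s = μ s • μ[|s] := by
  rw [ProbabilityTheory.cond, smul_smul, ENNReal.mul_inv_cancel hs0 (measure_ne_top _ _),
    one_smul]

/-- Key stratum computation: integrability and value of `∫ g(X) k(X) dμ`. -/
lemma stratum_integral_eq (μ : Measure Ω) [IsProbabilityMeasure μ]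
    (X : Ω → α) (hX : Measurable X) (u : Set Ω) (hu0 : μ u ≠ 0)
    (g : α → ℝ) (hg : Measurable g) (hg0 : ∀ x, 0 ≤ g x)
    (hmap : (μ.restrict u).map X
        = (μ.map X).withDensity (fun x => ENNReal.ofReal (g x)))
    (k : α → ℝ) (hk : Measurable k) (hki : Integrable (fun ω => k (X ω)) (μ[|u])) :
    Integrable (fun ω => g (X ω) * k (X ω)) μ ∧
      ∫ ω, g (X ω) * k (X ω) ∂μ = (μ u).toReal * ∫ ω, k (X ω) ∂(μ[|u]) := by
  have hres : μ.restrict u = μ u • μ[|u] := restrict_eq_smul_cond μ u hu0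
  have hio : IntegrableOn (fun ω => k (X ω)) u μ := by
    rw [IntegrableOn, hres]
    exact hki.smul_measure (measure_ne_top _ _)
  constructor
  · exact (integrable_mul_iff_of_map_restrict μ X hX u g hg hg0 hmap k hk).mpr hio
  · rw [← integral_mul_of_map_restrict μ X hX u g hg hg0 hmap k hk]
    have h2 : ∫ ω in u, k (X ω) ∂μ = ∫ ω, k (X ω) ∂(μ u • μ[|u]) := by rw [← hres]
    rw [h2, integral_smul_measure, smul_eq_mul]

end AuxHelpers

/-- **Tangent-space decomposition.** Any mean-zero square-integrable function
`h(T, X, S, Y·𝟙{G=0}, G)` of the observed data decomposes as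
`h = GT S₁(S|X) + G(1-T) S₀(S|X) + G(T-e(X))a(X) + (G-π(X))b(X)`
`  + (1-G)T[S_Y¹ + S_S¹] + (1-G)(1-T)[S_Y⁰ + S_S⁰] + (1-G)(T-p(X))c(X) + S_X(X)`,
where each component has the appropriate zero conditional mean. -/
theorem tangent_space_decomposition
    {Ω : Type*} [MeasurableSpace Ω]
    {α β : Type*} [mα : MeasurableSpace α] [mβ : MeasurableSpace β]
    (P : Measure Ω) [IsProbabilityMeasure P]
    (X : Ω → α) (S : Ω → β) (T G Y : Ω → ℝ)
    (hX : Measurable X) (hS : Measurable S) (hT : Measurable T) (hG : Measurable G)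
    (hY : Measurable Y)
    (hTbin : ∀ ω, T ω = 0 ∨ T ω = 1) (hGbin : ∀ ω, G ω = 0 ∨ G ω = 1)
    (hpos : ∀ tv gv : ℝ, tv ∈ ({0, 1} : Set ℝ) → gv ∈ ({0, 1} : Set ℝ) →
      P ({ω | T ω = tv} ∩ G ⁻¹' {gv}) ≠ 0)
    -- `e(x) = P(T=1|X=x,G=1)`, `p(x) = P(T=1|X=x,G=0)`, `π(x) = P(G=1|X=x)`, all in `(0,1)`
    (e p π : α → ℝ) (he : Measurable e) (hp : Measurable p) (hπ : Measurable π)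
    (he_ver : IsCondMean (P[|G ⁻¹' {1}]) X T e)
    (hp_ver : IsCondMean (P[|G ⁻¹' {0}]) X T p)
    (hπ_ver : IsCondMean P X G π)
    (he_bdd : ∀ x, 0 < e x ∧ e x < 1) (hp_bdd : ∀ x, 0 < p x ∧ p x < 1)
    (hπ_bdd : ∀ x, 0 < π x ∧ π x < 1)
    -- `h` is a square-integrable mean-zero function of the observed data
    -- `(T, X, S, Y·𝟙{G=0}, G)`
    (H : ℝ × α × β × ℝ × ℝ → ℝ) (hH : Measurable H)
    (h : Ω → ℝ)
    (hdef : ∀ ω, h ω = H (T ω, X ω, S ω, (1 - G ω) * Y ω, G ω))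
    (hL2 : MemLp h 2 P) (hmean : ∫ ω, h ω ∂P = 0) :
    ∃ (s1 s0 ss1 ss0 : α × β → ℝ) (a b c SX : α → ℝ) (sy1 sy0 : α × β × ℝ → ℝ),
      Measurable s1 ∧ Measurable s0 ∧ Measurable ss1 ∧ Measurable ss0 ∧
      Measurable a ∧ Measurable b ∧ Measurable c ∧ Measurable SX ∧
      Measurable sy1 ∧ Measurable sy0 ∧
      -- `E[S₁(S|X) | X, T=1, G=1] = 0`, `E[S₀(S|X) | X, T=0, G=1] = 0`
      (∀ B : Set α, MeasurableSet B →
        ∫ ω in X ⁻¹' B, s1 (X ω, S ω) ∂(P[|{ω | T ω = 1} ∩ G ⁻¹' {1}]) = 0) ∧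
      (∀ B : Set α, MeasurableSet B →
        ∫ ω in X ⁻¹' B, s0 (X ω, S ω) ∂(P[|{ω | T ω = 0} ∩ G ⁻¹' {1}]) = 0) ∧
      -- `E[S_Y^t | X, S, T=t, G=0] = 0`
      (∀ B : Set (α × β), MeasurableSet B →
        ∫ ω in (fun ω => (X ω, S ω)) ⁻¹' B, sy1 (X ω, S ω, Y ω)
          ∂(P[|{ω | T ω = 1} ∩ G ⁻¹' {0}]) = 0) ∧
      (∀ B : Set (α × β), MeasurableSet B →
        ∫ ω in (fun ω => (X ω, S ω)) ⁻¹' B, sy0 (X ω, S ω, Y ω)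
          ∂(P[|{ω | T ω = 0} ∩ G ⁻¹' {0}]) = 0) ∧
      -- `E[S_S^t | X, T=t, G=0] = 0`
      (∀ B : Set α, MeasurableSet B →
        ∫ ω in X ⁻¹' B, ss1 (X ω, S ω) ∂(P[|{ω | T ω = 1} ∩ G ⁻¹' {0}]) = 0) ∧
      (∀ B : Set α, MeasurableSet B →
        ∫ ω in X ⁻¹' B, ss0 (X ω, S ω) ∂(P[|{ω | T ω = 0} ∩ G ⁻¹' {0}]) = 0) ∧
      -- `E[S_X(X)] = 0`
      (∫ ω, SX (X ω) ∂P = 0) ∧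
      -- the decomposition itself
      (∀ᵐ ω ∂P, h ω
        = G ω * T ω * s1 (X ω, S ω)
          + G ω * (1 - T ω) * s0 (X ω, S ω)
          + G ω * (T ω - e (X ω)) * a (X ω)
          + (G ω - π (X ω)) * b (X ω)
          + (1 - G ω) * T ω * (sy1 (X ω, S ω, Y ω) + ss1 (X ω, S ω))
          + (1 - G ω) * (1 - T ω) * (sy0 (X ω, S ω, Y ω) + ss0 (X ω, S ω))
          + (1 - G ω) * (T ω - p (X ω)) * c (X ω)
          + SX (X ω)) := by
  classical
  -- basic sets
  have mG1 : MeasurableSet (G ⁻¹' {1}) := hG (measurableSet_singleton 1)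
  have mG0 : MeasurableSet (G ⁻¹' {0}) := hG (measurableSet_singleton 0)
  have mt1 : MeasurableSet {ω | T ω = 1} := hT (measurableSet_singleton 1)
  have mt0 : MeasurableSet {ω | T ω = 0} := hT (measurableSet_singleton 0)
  have pos11 : P ({ω | T ω = 1} ∩ G ⁻¹' {1}) ≠ 0 := hpos 1 1 (by simp) (by simp)
  have pos01 : P ({ω | T ω = 0} ∩ G ⁻¹' {1}) ≠ 0 := hpos 0 1 (by simp) (by simp)
  have pos10 : P ({ω | T ω = 1} ∩ G ⁻¹' {0}) ≠ 0 := hpos 1 0 (by simp) (by simp)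
  have pos00 : P ({ω | T ω = 0} ∩ G ⁻¹' {0}) ≠ 0 := hpos 0 0 (by simp) (by simp)
  have posG1 : P (G ⁻¹' {1}) ≠ 0 :=
    fun hc => pos11 (measure_mono_null Set.inter_subset_right hc)
  have posG0 : P (G ⁻¹' {0}) ≠ 0 :=
    fun hc => pos10 (measure_mono_null Set.inter_subset_right hc)
  haveI iP1 : IsProbabilityMeasure (P[|G ⁻¹' {1}]) := cond_isProbabilityMeasure posG1
  haveI iP0 : IsProbabilityMeasure (P[|G ⁻¹' {0}]) := cond_isProbabilityMeasure posG0
  haveI iP11 : IsProbabilityMeasure (P[|{ω | T ω = 1} ∩ G ⁻¹' {1}]) :=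
    cond_isProbabilityMeasure pos11
  haveI iP01 : IsProbabilityMeasure (P[|{ω | T ω = 0} ∩ G ⁻¹' {1}]) :=
    cond_isProbabilityMeasure pos01
  haveI iP10 : IsProbabilityMeasure (P[|{ω | T ω = 1} ∩ G ⁻¹' {0}]) :=
    cond_isProbabilityMeasure pos10
  haveI iP00 : IsProbabilityMeasure (P[|{ω | T ω = 0} ∩ G ⁻¹' {0}]) :=
    cond_isProbabilityMeasure pos00
  -- integrability of h
  have hint : Integrable h P := hL2.integrable one_le_two
  have hcond : ∀ s : Set Ω, P s ≠ 0 → Integrable h (P[|s]) := by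
    intro s hs
    rw [ProbabilityTheory.cond]
    exact (hint.restrict).smul_measure (ENNReal.inv_ne_top.mpr hs)
  -- conditional mean functions
  obtain ⟨m11, m11_meas, m11_int, m11_eq⟩ :=
    exists_condMeanFun (P[|{ω | T ω = 1} ∩ G ⁻¹' {1}]) X hX h (hcond _ pos11)
  obtain ⟨m01, m01_meas, m01_int, m01_eq⟩ :=
    exists_condMeanFun (P[|{ω | T ω = 0} ∩ G ⁻¹' {1}]) X hX h (hcond _ pos01)
  obtain ⟨m10, m10_meas, m10_int, m10_eq⟩ :=
    exists_condMeanFun (P[|{ω | T ω = 1} ∩ G ⁻¹' {0}]) X hX h (hcond _ pos10)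
  obtain ⟨m00, m00_meas, m00_int, m00_eq⟩ :=
    exists_condMeanFun (P[|{ω | T ω = 0} ∩ G ⁻¹' {0}]) X hX h (hcond _ pos00)
  obtain ⟨φ1, φ1_meas, φ1_int, φ1_eq⟩ :=
    exists_condMeanFun (P[|{ω | T ω = 1} ∩ G ⁻¹' {0}]) (fun ω => (X ω, S ω))
      (hX.prodMk hS) h (hcond _ pos10)
  obtain ⟨φ0, φ0_meas, φ0_int, φ0_eq⟩ :=
    exists_condMeanFun (P[|{ω | T ω = 0} ∩ G ⁻¹' {0}]) (fun ω => (X ω, S ω))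
      (hX.prodMk hS) h (hcond _ pos00)
  -- density maps for the binary conditional means
  have hGset1 : {ω | G ω = 1} = G ⁻¹' {1} := rfl
  have hGset0 : {ω | G ω = 0} = G ⁻¹' {0} := rfl
  obtain ⟨mapπ1, mapπ0⟩ :=
    binary_condMean_maps P X hX G hG hGbin π hπ (fun x => (hπ_bdd x).1.le)
      (fun x => (hπ_bdd x).2.le) hπ_ver
  rw [hGset1] at mapπ1
  rw [hGset0] at mapπ0
  obtain ⟨mape1, mape0⟩ :=
    binary_condMean_maps (P[|G ⁻¹' {1}]) X hX T hT hTbin e he (fun x => (he_bdd x).1.le)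
      (fun x => (he_bdd x).2.le) he_ver
  obtain ⟨mapp1, mapp0⟩ :=
    binary_condMean_maps (P[|G ⁻¹' {0}]) X hX T hT hTbin p hp (fun x => (hp_bdd x).1.le)
      (fun x => (hp_bdd x).2.le) hp_ver
  -- iterated conditioning
  have cc11 : (P[|G ⁻¹' {1}])[|{ω | T ω = 1}] = P[|{ω | T ω = 1} ∩ G ⁻¹' {1}] := by
    rw [cond_cond_eq_cond_inter mG1 mt1, Set.inter_comm]
  have cc01 : (P[|G ⁻¹' {1}])[|{ω | T ω = 0}] = P[|{ω | T ω = 0} ∩ G ⁻¹' {1}] := by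
    rw [cond_cond_eq_cond_inter mG1 mt0, Set.inter_comm]
  have cc10 : (P[|G ⁻¹' {0}])[|{ω | T ω = 1}] = P[|{ω | T ω = 1} ∩ G ⁻¹' {0}] := by
    rw [cond_cond_eq_cond_inter mG0 mt1, Set.inter_comm]
  have cc00 : (P[|G ⁻¹' {0}])[|{ω | T ω = 0}] = P[|{ω | T ω = 0} ∩ G ⁻¹' {0}] := by
    rw [cond_cond_eq_cond_inter mG0 mt0, Set.inter_comm]
  -- conditional measures of the treatment sets are nonzero
  have hPG1top : P (G ⁻¹' {1}) ≠ ⊤ := measure_ne_top _ _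
  have hPG0top : P (G ⁻¹' {0}) ≠ ⊤ := measure_ne_top _ _
  have c1t1 : (P[|G ⁻¹' {1}]) {ω | T ω = 1} ≠ 0 := by
    rw [cond_apply mG1]
    exact mul_ne_zero (ENNReal.inv_ne_zero.mpr hPG1top)
      (by rw [Set.inter_comm]; exact pos11)
  have c1t0 : (P[|G ⁻¹' {1}]) {ω | T ω = 0} ≠ 0 := by
    rw [cond_apply mG1]
    exact mul_ne_zero (ENNReal.inv_ne_zero.mpr hPG1top)
      (by rw [Set.inter_comm]; exact pos01)
  have c0t1 : (P[|G ⁻¹' {0}]) {ω | T ω = 1} ≠ 0 := by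
    rw [cond_apply mG0]
    exact mul_ne_zero (ENNReal.inv_ne_zero.mpr hPG0top)
      (by rw [Set.inter_comm]; exact pos10)
  have c0t0 : (P[|G ⁻¹' {0}]) {ω | T ω = 0} ≠ 0 := by
    rw [cond_apply mG0]
    exact mul_ne_zero (ENNReal.inv_ne_zero.mpr hPG0top)
      (by rw [Set.inter_comm]; exact pos00)
  -- inner stratum computations
  have S11 := stratum_integral_eq (P[|G ⁻¹' {1}]) X hX {ω | T ω = 1} c1t1 e he
    (fun x => (he_bdd x).1.le) mape1 m11 m11_meas (by rw [cc11]; exact m11_int)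
  have S01 := stratum_integral_eq (P[|G ⁻¹' {1}]) X hX {ω | T ω = 0} c1t0
    (fun x => 1 - e x) (measurable_const.sub he)
    (fun x => by show (0:ℝ) ≤ 1 - e x; linarith [(he_bdd x).2]) mape0 m01 m01_meas (by rw [cc01]; exact m01_int)
  have S10 := stratum_integral_eq (P[|G ⁻¹' {0}]) X hX {ω | T ω = 1} c0t1 p hp
    (fun x => (hp_bdd x).1.le) mapp1 m10 m10_meas (by rw [cc10]; exact m10_int)
  have S00 := stratum_integral_eq (P[|G ⁻¹' {0}]) X hX {ω | T ω = 0} c0t0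
    (fun x => 1 - p x) (measurable_const.sub hp)
    (fun x => by show (0:ℝ) ≤ 1 - p x; linarith [(hp_bdd x).2]) mapp0 m00 m00_meas (by rw [cc00]; exact m00_int)
  -- clean restatements
  have m11_univ : ∫ ω, m11 (X ω) ∂(P[|{ω | T ω = 1} ∩ G ⁻¹' {1}])
      = ∫ ω, h ω ∂(P[|{ω | T ω = 1} ∩ G ⁻¹' {1}]) := by
    simpa using m11_eq Set.univ MeasurableSet.univ
  have m01_univ : ∫ ω, m01 (X ω) ∂(P[|{ω | T ω = 0} ∩ G ⁻¹' {1}])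
      = ∫ ω, h ω ∂(P[|{ω | T ω = 0} ∩ G ⁻¹' {1}]) := by
    simpa using m01_eq Set.univ MeasurableSet.univ
  have m10_univ : ∫ ω, m10 (X ω) ∂(P[|{ω | T ω = 1} ∩ G ⁻¹' {0}])
      = ∫ ω, h ω ∂(P[|{ω | T ω = 1} ∩ G ⁻¹' {0}]) := by
    simpa using m10_eq Set.univ MeasurableSet.univ
  have m00_univ : ∫ ω, m00 (X ω) ∂(P[|{ω | T ω = 0} ∩ G ⁻¹' {0}])
      = ∫ ω, h ω ∂(P[|{ω | T ω = 0} ∩ G ⁻¹' {0}]) := by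
    simpa using m00_eq Set.univ MeasurableSet.univ
  have S11' : Integrable (fun ω => e (X ω) * m11 (X ω)) (P[|G ⁻¹' {1}]) ∧
      ∫ ω, e (X ω) * m11 (X ω) ∂(P[|G ⁻¹' {1}])
        = ((P[|G ⁻¹' {1}]) {ω | T ω = 1}).toReal
            * ∫ ω, h ω ∂(P[|{ω | T ω = 1} ∩ G ⁻¹' {1}]) := by
    rw [← m11_univ, ← cc11]; exact S11
  have S01' : Integrable (fun ω => (1 - e (X ω)) * m01 (X ω)) (P[|G ⁻¹' {1}]) ∧
      ∫ ω, (1 - e (X ω)) * m01 (X ω) ∂(P[|G ⁻¹' {1}])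
        = ((P[|G ⁻¹' {1}]) {ω | T ω = 0}).toReal
            * ∫ ω, h ω ∂(P[|{ω | T ω = 0} ∩ G ⁻¹' {1}]) := by
    rw [← m01_univ, ← cc01]; exact S01
  have S10' : Integrable (fun ω => p (X ω) * m10 (X ω)) (P[|G ⁻¹' {0}]) ∧
      ∫ ω, p (X ω) * m10 (X ω) ∂(P[|G ⁻¹' {0}])
        = ((P[|G ⁻¹' {0}]) {ω | T ω = 1}).toReal
            * ∫ ω, h ω ∂(P[|{ω | T ω = 1} ∩ G ⁻¹' {0}]) := by
    rw [← m10_univ, ← cc10]; exact S10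
  have S00' : Integrable (fun ω => (1 - p (X ω)) * m00 (X ω)) (P[|G ⁻¹' {0}]) ∧
      ∫ ω, (1 - p (X ω)) * m00 (X ω) ∂(P[|G ⁻¹' {0}])
        = ((P[|G ⁻¹' {0}]) {ω | T ω = 0}).toReal
            * ∫ ω, h ω ∂(P[|{ω | T ω = 0} ∩ G ⁻¹' {0}]) := by
    rw [← m00_univ, ← cc00]; exact S00
  -- outer stratum computations
  have M1meas : Measurable (fun x => e x * m11 x + (1 - e x) * m01 x) :=
    (he.mul m11_meas).add ((measurable_const.sub he).mul m01_meas)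
  have M0meas : Measurable (fun x => p x * m10 x + (1 - p x) * m00 x) :=
    (hp.mul m10_meas).add ((measurable_const.sub hp).mul m00_meas)
  have Sπ1 := stratum_integral_eq P X hX (G ⁻¹' {1}) posG1 π hπ
    (fun x => (hπ_bdd x).1.le) mapπ1 (fun x => e x * m11 x + (1 - e x) * m01 x) M1meas
    (S11'.1.add S01'.1)
  have Sπ0 := stratum_integral_eq P X hX (G ⁻¹' {0}) posG0
    (fun x => 1 - π x) (measurable_const.sub hπ)
    (fun x => by show (0:ℝ) ≤ 1 - π x; linarith [(hπ_bdd x).2]) mapπ0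
    (fun x => p x * m10 x + (1 - p x) * m00 x) M0meas (S10'.1.add S00'.1)
  have Sπ1' : Integrable (fun ω => π (X ω) * (e (X ω) * m11 (X ω) + (1 - e (X ω)) * m01 (X ω))) P ∧
      ∫ ω, π (X ω) * (e (X ω) * m11 (X ω) + (1 - e (X ω)) * m01 (X ω)) ∂P
        = (P (G ⁻¹' {1})).toReal
            * ∫ ω, (e (X ω) * m11 (X ω) + (1 - e (X ω)) * m01 (X ω)) ∂(P[|G ⁻¹' {1}]) := Sπ1
  have Sπ0' : Integrable (fun ω => (1 - π (X ω)) * (p (X ω) * m10 (X ω) + (1 - p (X ω)) * m00 (X ω))) P ∧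
      ∫ ω, (1 - π (X ω)) * (p (X ω) * m10 (X ω) + (1 - p (X ω)) * m00 (X ω)) ∂P
        = (P (G ⁻¹' {0})).toReal
            * ∫ ω, (p (X ω) * m10 (X ω) + (1 - p (X ω)) * m00 (X ω)) ∂(P[|G ⁻¹' {0}]) := Sπ0
  -- set-integral value via conditional measure
  have vset : ∀ s : Set Ω, P s ≠ 0 →
      ∫ ω in s, h ω ∂P = (P s).toReal * ∫ ω, h ω ∂(P[|s]) := by
    intro s hs0
    rw [restrict_eq_smul_cond P s hs0, integral_smul_measure, smul_eq_mul]
  -- coefficient collapse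
  have coef : ∀ u t : Set Ω, MeasurableSet u → P u ≠ 0 → P (t ∩ u) ≠ 0 →
      (P u).toReal * (((P[|u]) t).toReal * ∫ ω, h ω ∂(P[|t ∩ u]))
        = ∫ ω in t ∩ u, h ω ∂P := by
    intro u t hu hu0 htu0
    rw [vset _ htu0, cond_apply hu, ENNReal.toReal_mul, ENNReal.toReal_inv, Set.inter_comm u t]
    have hA : (P u).toReal ≠ 0 := ENNReal.toReal_ne_zero.mpr ⟨hu0, measure_ne_top _ _⟩
    field_simp
  -- splitting the total integral of h over the four strata
  have hG0c : G ⁻¹' {0} = (G ⁻¹' {1})ᶜ := by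
    ext ω; rcases hGbin ω with h' | h' <;> simp [h']
  have ht0c : {ω | T ω = 0} = {ω | T ω = 1}ᶜ := by
    ext ω; rcases hTbin ω with h' | h' <;> simp [h']
  have splitG : ∀ u : Set Ω, MeasurableSet u →
      ∫ ω in u, h ω ∂P
        = ∫ ω in {ω | T ω = 1} ∩ u, h ω ∂P + ∫ ω in {ω | T ω = 0} ∩ u, h ω ∂P := by
    intro u hu
    have e1 := integral_add_compl mt1 (hint.restrict : Integrable h (P.restrict u))
    rw [← e1, ht0c]
    congr 1
    · rw [← Measure.restrict_restrict mt1]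
    · rw [← Measure.restrict_restrict mt1.compl]
  have hsplit : ∫ ω, h ω ∂P
      = ∫ ω in {ω | T ω = 1} ∩ G ⁻¹' {1}, h ω ∂P
        + ∫ ω in {ω | T ω = 0} ∩ G ⁻¹' {1}, h ω ∂P
        + (∫ ω in {ω | T ω = 1} ∩ G ⁻¹' {0}, h ω ∂P
        + ∫ ω in {ω | T ω = 0} ∩ G ⁻¹' {0}, h ω ∂P) := by
    rw [← splitG _ mG1, ← splitG _ mG0, hG0c, integral_add_compl mG1 hint]
  -- the tower identity
  have tower : ∫ ω, (π (X ω) * (e (X ω) * m11 (X ω) + (1 - e (X ω)) * m01 (X ω))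
      + (1 - π (X ω)) * (p (X ω) * m10 (X ω) + (1 - p (X ω)) * m00 (X ω))) ∂P = 0 := by
    rw [integral_add Sπ1'.1 Sπ0'.1, Sπ1'.2, Sπ0'.2,
      integral_add S11'.1 S01'.1, integral_add S10'.1 S00'.1,
      S11'.2, S01'.2, S10'.2, S00'.2, mul_add, mul_add,
      ← mul_assoc, ← mul_assoc, ← mul_assoc, ← mul_assoc]
    rw [mul_assoc ((P (G ⁻¹' {1})).toReal), coef _ _ mG1 posG1 pos11,
      mul_assoc ((P (G ⁻¹' {1})).toReal), coef _ _ mG1 posG1 pos01,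
      mul_assoc ((P (G ⁻¹' {0})).toReal), coef _ _ mG0 posG0 pos10,
      mul_assoc ((P (G ⁻¹' {0})).toReal), coef _ _ mG0 posG0 pos00]
    linarith [hsplit, hmean]
  -- clean versions of the (X,S)-conditional means
  have φ1_int' : Integrable (fun ω => φ1 (X ω, S ω)) (P[|{ω | T ω = 1} ∩ G ⁻¹' {0}]) := φ1_int
  have φ0_int' : Integrable (fun ω => φ0 (X ω, S ω)) (P[|{ω | T ω = 0} ∩ G ⁻¹' {0}]) := φ0_int
  have φ1_eq' : ∀ B : Set (α × β), MeasurableSet B →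
      ∫ ω in (fun ω => (X ω, S ω)) ⁻¹' B, φ1 (X ω, S ω) ∂(P[|{ω | T ω = 1} ∩ G ⁻¹' {0}])
        = ∫ ω in (fun ω => (X ω, S ω)) ⁻¹' B, h ω ∂(P[|{ω | T ω = 1} ∩ G ⁻¹' {0}]) := φ1_eq
  have φ0_eq' : ∀ B : Set (α × β), MeasurableSet B →
      ∫ ω in (fun ω => (X ω, S ω)) ⁻¹' B, φ0 (X ω, S ω) ∂(P[|{ω | T ω = 0} ∩ G ⁻¹' {0}])
        = ∫ ω in (fun ω => (X ω, S ω)) ⁻¹' B, h ω ∂(P[|{ω | T ω = 0} ∩ G ⁻¹' {0}]) := φ0_eq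
  -- a.e. membership in the conditioning set
  have aemem : ∀ s : Set Ω, MeasurableSet s → ∀ᵐ ω ∂(P[|s]), ω ∈ s := by
    intro s hs
    rw [ae_iff]
    have hcs : {ω | ¬ ω ∈ s} = sᶜ := rfl
    rw [hcs, cond_apply hs, Set.inter_compl_self, measure_empty, mul_zero]
  -- a.e. descriptions of h on each stratum
  have hae11 : h =ᵐ[P[|{ω | T ω = 1} ∩ G ⁻¹' {1}]] fun ω => H (1, X ω, S ω, 0, 1) := by
    filter_upwards [aemem _ (mt1.inter mG1)] with ω hω
    have h1 : T ω = 1 := hω.1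
    have h2 : G ω = 1 := hω.2
    rw [hdef ω, h1, h2]
    norm_num
  have hae01 : h =ᵐ[P[|{ω | T ω = 0} ∩ G ⁻¹' {1}]] fun ω => H (0, X ω, S ω, 0, 1) := by
    filter_upwards [aemem _ (mt0.inter mG1)] with ω hω
    have h1 : T ω = 0 := hω.1
    have h2 : G ω = 1 := hω.2
    rw [hdef ω, h1, h2]
    norm_num
  have hae10 : h =ᵐ[P[|{ω | T ω = 1} ∩ G ⁻¹' {0}]] fun ω => H (1, X ω, S ω, Y ω, 0) := by
    filter_upwards [aemem _ (mt1.inter mG0)] with ω hω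
    have h1 : T ω = 1 := hω.1
    have h2 : G ω = 0 := hω.2
    rw [hdef ω, h1, h2]
    norm_num
  have hae00 : h =ᵐ[P[|{ω | T ω = 0} ∩ G ⁻¹' {0}]] fun ω => H (0, X ω, S ω, Y ω, 0) := by
    filter_upwards [aemem _ (mt0.inter mG0)] with ω hω
    have h1 : T ω = 0 := hω.1
    have h2 : G ω = 0 := hω.2
    rw [hdef ω, h1, h2]
    norm_num
  -- the zero-mean conditions
  have C1 : ∀ B : Set α, MeasurableSet B →
      ∫ ω in X ⁻¹' B, (H (1, X ω, S ω, 0, 1) - m11 (X ω))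
        ∂(P[|{ω | T ω = 1} ∩ G ⁻¹' {1}]) = 0 := by
    intro B hB
    have hIf : Integrable (fun ω => H (1, X ω, S ω, 0, 1))
        (P[|{ω | T ω = 1} ∩ G ⁻¹' {1}]) := (hcond _ pos11).congr hae11
    rw [integral_sub hIf.integrableOn m11_int.integrableOn, m11_eq B hB,
      integral_congr_ae (ae_restrict_of_ae hae11.symm), sub_self]
  have C0 : ∀ B : Set α, MeasurableSet B →
      ∫ ω in X ⁻¹' B, (H (0, X ω, S ω, 0, 1) - m01 (X ω))
        ∂(P[|{ω | T ω = 0} ∩ G ⁻¹' {1}]) = 0 := by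
    intro B hB
    have hIf : Integrable (fun ω => H (0, X ω, S ω, 0, 1))
        (P[|{ω | T ω = 0} ∩ G ⁻¹' {1}]) := (hcond _ pos01).congr hae01
    rw [integral_sub hIf.integrableOn m01_int.integrableOn, m01_eq B hB,
      integral_congr_ae (ae_restrict_of_ae hae01.symm), sub_self]
  have Cy1 : ∀ B : Set (α × β), MeasurableSet B →
      ∫ ω in (fun ω => (X ω, S ω)) ⁻¹' B, (H (1, X ω, S ω, Y ω, 0) - φ1 (X ω, S ω))
        ∂(P[|{ω | T ω = 1} ∩ G ⁻¹' {0}]) = 0 := by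
    intro B hB
    have hIf : Integrable (fun ω => H (1, X ω, S ω, Y ω, 0))
        (P[|{ω | T ω = 1} ∩ G ⁻¹' {0}]) := (hcond _ pos10).congr hae10
    rw [integral_sub hIf.integrableOn φ1_int'.integrableOn, φ1_eq' B hB,
      integral_congr_ae (ae_restrict_of_ae hae10.symm), sub_self]
  have Cy0 : ∀ B : Set (α × β), MeasurableSet B →
      ∫ ω in (fun ω => (X ω, S ω)) ⁻¹' B, (H (0, X ω, S ω, Y ω, 0) - φ0 (X ω, S ω))
        ∂(P[|{ω | T ω = 0} ∩ G ⁻¹' {0}]) = 0 := by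
    intro B hB
    have hIf : Integrable (fun ω => H (0, X ω, S ω, Y ω, 0))
        (P[|{ω | T ω = 0} ∩ G ⁻¹' {0}]) := (hcond _ pos00).congr hae00
    rw [integral_sub hIf.integrableOn φ0_int'.integrableOn, φ0_eq' B hB,
      integral_congr_ae (ae_restrict_of_ae hae00.symm), sub_self]
  have Cs1 : ∀ B : Set α, MeasurableSet B →
      ∫ ω in X ⁻¹' B, (φ1 (X ω, S ω) - m10 (X ω))
        ∂(P[|{ω | T ω = 1} ∩ G ⁻¹' {0}]) = 0 := by
    intro B hB
    have hpre : (fun ω => (X ω, S ω)) ⁻¹' (B ×ˢ (Set.univ : Set β)) = X ⁻¹' B := by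
      ext ω; simp
    have e1 : ∫ ω in X ⁻¹' B, φ1 (X ω, S ω) ∂(P[|{ω | T ω = 1} ∩ G ⁻¹' {0}])
        = ∫ ω in X ⁻¹' B, h ω ∂(P[|{ω | T ω = 1} ∩ G ⁻¹' {0}]) := by
      have := φ1_eq' (B ×ˢ (Set.univ : Set β)) (hB.prod MeasurableSet.univ)
      rwa [hpre] at this
    rw [integral_sub φ1_int'.integrableOn m10_int.integrableOn, e1, m10_eq B hB, sub_self]
  have Cs0 : ∀ B : Set α, MeasurableSet B →
      ∫ ω in X ⁻¹' B, (φ0 (X ω, S ω) - m00 (X ω))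
        ∂(P[|{ω | T ω = 0} ∩ G ⁻¹' {0}]) = 0 := by
    intro B hB
    have hpre : (fun ω => (X ω, S ω)) ⁻¹' (B ×ˢ (Set.univ : Set β)) = X ⁻¹' B := by
      ext ω; simp
    have e1 : ∫ ω in X ⁻¹' B, φ0 (X ω, S ω) ∂(P[|{ω | T ω = 0} ∩ G ⁻¹' {0}])
        = ∫ ω in X ⁻¹' B, h ω ∂(P[|{ω | T ω = 0} ∩ G ⁻¹' {0}]) := by
      have := φ0_eq' (B ×ˢ (Set.univ : Set β)) (hB.prod MeasurableSet.univ)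
      rwa [hpre] at this
    rw [integral_sub φ0_int'.integrableOn m00_int.integrableOn, e1, m00_eq B hB, sub_self]
  -- assemble
  refine ⟨fun q => H (1, q.1, q.2, 0, 1) - m11 q.1,
    fun q => H (0, q.1, q.2, 0, 1) - m01 q.1,
    fun q => φ1 q - m10 q.1,
    fun q => φ0 q - m00 q.1,
    fun x => m11 x - m01 x,
    fun x => (e x * m11 x + (1 - e x) * m01 x) - (p x * m10 x + (1 - p x) * m00 x),
    fun x => m10 x - m00 x,
    fun x => π x * (e x * m11 x + (1 - e x) * m01 x)
      + (1 - π x) * (p x * m10 x + (1 - p x) * m00 x),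
    fun q => H (1, q.1, q.2.1, q.2.2, 0) - φ1 (q.1, q.2.1),
    fun q => H (0, q.1, q.2.1, q.2.2, 0) - φ0 (q.1, q.2.1),
    ?_, ?_, ?_, ?_, ?_, ?_, ?_, ?_, ?_, ?_,
    C1, C0, Cy1, Cy0, Cs1, Cs0, tower, ?_⟩
  · exact (hH.comp (measurable_const.prodMk (measurable_fst.prodMk
      (measurable_snd.prodMk (measurable_const.prodMk measurable_const))))).sub
      (m11_meas.comp measurable_fst)
  · exact (hH.comp (measurable_const.prodMk (measurable_fst.prodMk
      (measurable_snd.prodMk (measurable_const.prodMk measurable_const))))).sub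
      (m01_meas.comp measurable_fst)
  · exact φ1_meas.sub (m10_meas.comp measurable_fst)
  · exact φ0_meas.sub (m00_meas.comp measurable_fst)
  · exact m11_meas.sub m01_meas
  · exact (((he.mul m11_meas).add ((measurable_const.sub he).mul m01_meas)).sub
      ((hp.mul m10_meas).add ((measurable_const.sub hp).mul m00_meas)))
  · exact m10_meas.sub m00_meas
  · exact ((hπ.mul M1meas).add ((measurable_const.sub hπ).mul M0meas))
  · exact (hH.comp (measurable_const.prodMk (measurable_fst.prodMk
      ((measurable_fst.comp measurable_snd).prodMk
        ((measurable_snd.comp measurable_snd).prodMk measurable_const))))).sub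
      (φ1_meas.comp (measurable_fst.prodMk (measurable_fst.comp measurable_snd)))
  · exact (hH.comp (measurable_const.prodMk (measurable_fst.prodMk
      ((measurable_fst.comp measurable_snd).prodMk
        ((measurable_snd.comp measurable_snd).prodMk measurable_const))))).sub
      (φ0_meas.comp (measurable_fst.prodMk (measurable_fst.comp measurable_snd)))
  · refine Filter.Eventually.of_forall fun ω => ?_
    rcases hTbin ω with ht | ht <;> rcases hGbin ω with hg | hg <;>
      simp only [hdef ω, ht, hg, sub_zero, sub_self, zero_mul, mul_zero, one_mul,
        mul_one, zero_add, add_zero] <;>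
      ring
end

section
/- Under internal validity and mean exchangeability, the term A = E[ G(μ₁(X) - τ₁) · S(T,X,S,Y,G) ] in the pathwise derivative calculation reduces to E[(μ₁(X) - τ₁)(π̇(X) + π(X)S_f(X))], where S is the score of the parametric submodel; i.e., the cross terms with T·S₁(S|X), the propensity-score score, and the (G-π(X)) score vanish except for the π and f(x) components. -/
open MeasureTheory ProbabilityTheory Filter Topology

lemma simpleFunc_integral_mul_eq_zero_aux {Ω α : Type*} [MeasurableSpace Ω] [MeasurableSpace α]
    (Q : Measure Ω) {X : Ω → α} (hX : Measurable X) (W : Ω → ℝ) (hW : Measurable W)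
    (hzero : ∀ B : Set α, MeasurableSet B → ∫ ω in X ⁻¹' B, W ω ∂Q = 0)
    (s : SimpleFunc α ℝ) (hsi : Integrable (fun ω => s (X ω) * W ω) Q) :
    ∫ ω, s (X ω) * W ω ∂Q = 0 := by
  classical
  set F : Finset ℝ := s.range.filter (fun c => c ≠ 0) with hF
  have hpt : ∀ ω, s (X ω) * W ω
      = ∑ c ∈ F, Set.indicator (X ⁻¹' (s ⁻¹' {c})) (fun ω => c * W ω) ω := by
    intro ω
    by_cases h0 : s (X ω) = 0
    · rw [h0, zero_mul]
      refine (Finset.sum_eq_zero fun c hc => ?_).symm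
      have hc0 : c ≠ 0 := (Finset.mem_filter.1 hc).2
      exact Set.indicator_of_notMem
        (fun h : ω ∈ X ⁻¹' (⇑s ⁻¹' {c}) => hc0 ((Set.mem_singleton_iff.1 h).symm.trans h0)) _
    · have hmem : s (X ω) ∈ F :=
        Finset.mem_filter.2 ⟨SimpleFunc.mem_range_self s (X ω), h0⟩
      rw [Finset.sum_eq_single (s (X ω))]
      · rw [Set.indicator_of_mem (by exact rfl : ω ∈ X ⁻¹' (s ⁻¹' {s (X ω)}))]
      · intro b _ hb
        exact Set.indicator_of_notMem
          (fun h : ω ∈ X ⁻¹' (⇑s ⁻¹' {b}) => hb (Set.mem_singleton_iff.1 h).symm) _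
      · intro h; exact absurd hmem h
  have hrw : (fun ω => s (X ω) * W ω)
      = fun ω => ∑ c ∈ F, Set.indicator (X ⁻¹' (s ⁻¹' {c})) (fun ω => c * W ω) ω :=
    funext hpt
  have hintc : ∀ c ∈ F,
      Integrable (fun ω => Set.indicator (X ⁻¹' (s ⁻¹' {c})) (fun ω => c * W ω) ω) Q := by
    intro c _
    refine Integrable.mono' hsi.norm
      (((measurable_const.mul hW).indicator (hX (s.measurableSet_fiber c))).aestronglyMeasurable)
      (ae_of_all _ fun ω => ?_)
    by_cases hm : ω ∈ X ⁻¹' (s ⁻¹' {c})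
    · rw [Set.indicator_of_mem hm]
      have : s (X ω) = c := Set.mem_singleton_iff.1 hm
      rw [← this]
    · rw [Set.indicator_of_notMem hm, norm_zero]
      exact norm_nonneg _
  rw [hrw, integral_finset_sum F hintc]
  refine Finset.sum_eq_zero fun c _ => ?_
  rw [integral_indicator (hX (s.measurableSet_fiber c)), integral_const_mul,
    hzero _ (s.measurableSet_fiber c), mul_zero]

lemma integral_mul_eq_zero_of_setIntegral {Ω α : Type*} [MeasurableSpace Ω] [MeasurableSpace α]
    (Q : Measure Ω) {X : Ω → α} (hX : Measurable X) (W : Ω → ℝ) (hW : Measurable W)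
    (g : α → ℝ) (hg : Measurable g)
    (hgi : Integrable (fun ω => g (X ω) * W ω) Q)
    (hzero : ∀ B : Set α, MeasurableSet B → ∫ ω in X ⁻¹' B, W ω ∂Q = 0) :
    ∫ ω, g (X ω) * W ω ∂Q = 0 := by
  classical
  set gn : ℕ → SimpleFunc α ℝ :=
    fun n => SimpleFunc.approxOn g hg Set.univ 0 (Set.mem_univ 0) n with hgn
  have hbound : ∀ n ω, ‖gn n (X ω) * W ω‖ ≤ ‖g (X ω) * W ω‖ + ‖g (X ω) * W ω‖ := by
    intro n ω
    rw [norm_mul, norm_mul, ← add_mul]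
    exact mul_le_mul_of_nonneg_right
      (SimpleFunc.norm_approxOn_zero_le hg (Set.mem_univ 0) (X ω) n) (norm_nonneg _)
  have hint_n : ∀ n, Integrable (fun ω => gn n (X ω) * W ω) Q := fun n =>
    Integrable.mono' (hgi.norm.add hgi.norm)
      ((((gn n).measurable.comp hX).mul hW).aestronglyMeasurable)
      (ae_of_all _ (hbound n))
  have hz : ∀ n, ∫ ω, gn n (X ω) * W ω ∂Q = 0 := fun n =>
    simpleFunc_integral_mul_eq_zero_aux Q hX W hW hzero (gn n) (hint_n n)
  have hlim : Tendsto (fun n => ∫ ω, gn n (X ω) * W ω ∂Q) atTop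
      (𝓝 (∫ ω, g (X ω) * W ω ∂Q)) := by
    refine tendsto_integral_of_dominated_convergence
      (fun ω => ‖g (X ω) * W ω‖ + ‖g (X ω) * W ω‖)
      (fun n => (((gn n).measurable.comp hX).mul hW).aestronglyMeasurable)
      (hgi.norm.add hgi.norm)
      (fun n => ae_of_all _ (hbound n))
      (ae_of_all _ fun ω => ?_)
    exact (SimpleFunc.tendsto_approxOn hg (Set.mem_univ 0) (by simp)).mul_const (W ω)
  have h0 : Tendsto (fun _ : ℕ => (0 : ℝ)) atTop (𝓝 (∫ ω, g (X ω) * W ω ∂Q)) := by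
    rw [show (fun _ : ℕ => (0 : ℝ)) = fun n => ∫ ω, gn n (X ω) * W ω ∂Q from
      funext fun n => (hz n).symm]
    exact hlim
  exact (tendsto_nhds_unique h0 tendsto_const_nhds)

lemma setIntegral_eq_cond_mul {Ω : Type*} [MeasurableSpace Ω] (P : Measure Ω)
    [IsFiniteMeasure P] {A : Set Ω} (hA0 : P A ≠ 0) (f : Ω → ℝ) :
    ∫ ω in A, f ω ∂P = (P A).toReal * ∫ ω, f ω ∂(P[|A]) := by
  have hne : (P A).toReal ≠ 0 := ENNReal.toReal_ne_zero.2 ⟨hA0, measure_ne_top P A⟩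
  rw [ProbabilityTheory.cond, integral_smul_measure, smul_eq_mul, ENNReal.toReal_inv,
    ← mul_assoc, mul_inv_cancel₀ hne, one_mul]

lemma integrable_cond_of_integrableOn {Ω : Type*} [MeasurableSpace Ω] {P : Measure Ω}
    {A : Set Ω} (hA0 : P A ≠ 0) {f : Ω → ℝ} (hf : IntegrableOn f A P) :
    Integrable f (P[|A]) :=
  hf.smul_measure (ENNReal.inv_ne_top.2 hA0)

lemma integrable_of_bound {Ω : Type*} [MeasurableSpace Ω] (Q : Measure Ω) [IsFiniteMeasure Q]
    {f : Ω → ℝ} (hf : Measurable f) (C : ℝ) (h : ∀ ω, ‖f ω‖ ≤ C) : Integrable f Q :=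
  Integrable.mono' (integrable_const C) hf.aestronglyMeasurable (ae_of_all _ h)

/-- **Reduction of the `A`-term in the pathwise derivative calculation.**
`A = E[ G (μ₁(X) - τ₁) · S(T,X,S,Y,G) ] = E[(μ₁(X) - τ₁)(π̇(X) + π(X) S_f(X))]`:
the cross terms with `T·S₁(S|X)`, the propensity-score score and the `(G-π(X))` score vanish
except for the `π` and `f(x)` components. -/
theorem A_term_reduction
    {Ω : Type*} [MeasurableSpace Ω]
    {α β : Type*} [mα : MeasurableSpace α] [mβ : MeasurableSpace β]
    (P : Measure Ω) [IsProbabilityMeasure P]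
    (X : Ω → α) (S : Ω → β) (T G Y Y1 : Ω → ℝ)
    (hX : Measurable X) (hS : Measurable S) (hT : Measurable T) (hG : Measurable G)
    (hY : Measurable Y) (hY1 : Measurable Y1)
    (hTbin : ∀ ω, T ω = 0 ∨ T ω = 1) (hGbin : ∀ ω, G ω = 0 ∨ G ω = 1)
    (hpos : ∀ tv gv : ℝ, tv ∈ ({0, 1} : Set ℝ) → gv ∈ ({0, 1} : Set ℝ) →
      P ({ω | T ω = tv} ∩ G ⁻¹' {gv}) ≠ 0)
    -- `e(x) = P(T=1|X=x,G=1)` and `π(x) = P(G=1|X=x)`, strictly in `(0,1)`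
    (e π p : α → ℝ) (he : Measurable e) (hπ : Measurable π) (hp : Measurable p)
    (he_ver : IsCondMean (P[|G ⁻¹' {1}]) X T e)
    (hπ_ver : IsCondMean P X G π)
    (he_bdd : ∀ x, 0 < e x ∧ e x < 1) (hπ_bdd : ∀ x, 0 < π x ∧ π x < 1)
    (hp_bdd : ∀ x, 0 < p x ∧ p x < 1)
    -- components of the submodel score
    (S1s S0s SS1 SS0 : α × β → ℝ) (SY1 SY0 : α × β × ℝ → ℝ)
    (edot pidot pdot Sf : α → ℝ)
    (hS1s : Measurable S1s) (hS0s : Measurable S0s) (hSS1 : Measurable SS1)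
    (hSS0 : Measurable SS0) (hSY1 : Measurable SY1) (hSY0 : Measurable SY0)
    (hedot : Measurable edot) (hpidot : Measurable pidot) (hpdot : Measurable pdot)
    (hSf : Measurable Sf)
    -- score-space conditions: `∫ S₁(s|x) f₁(s|x) ds = 0` (i.e. `E[S₁(S|X)|X,T=1,G=1]=0`),
    -- likewise for `S₀`, and `∫ S_f(x) f(x) dx = 0`
    (hS1s0 : ∀ B : Set α, MeasurableSet B →
      ∫ ω in X ⁻¹' B, S1s (X ω, S ω) ∂(P[|{ω | T ω = 1} ∩ G ⁻¹' {1}]) = 0)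
    (hS0s0 : ∀ B : Set α, MeasurableSet B →
      ∫ ω in X ⁻¹' B, S0s (X ω, S ω) ∂(P[|{ω | T ω = 0} ∩ G ⁻¹' {1}]) = 0)
    (hSf0 : ∫ ω, Sf (X ω) ∂P = 0)
    -- `μ₁(x) = E[Y(1)|X=x,G=1]` and `τ₁ = E[Y(1)|G=1]`
    (m : α → ℝ) (hm : Measurable m) (hm_ver : IsCondMean (P[|G ⁻¹' {1}]) X Y1 m)
    (τ₁ : ℝ) (hτ₁ : τ₁ = ∫ ω, Y1 ω ∂(P[|G ⁻¹' {1}]))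
    -- integrability of each product term
    (hint : ∀ f : Ω → ℝ,
      (f = fun ω => G ω * (m (X ω) - τ₁) *
          (G ω * T ω * S1s (X ω, S ω)
            + G ω * (1 - T ω) * S0s (X ω, S ω)
            + G ω * (T ω - e (X ω)) * edot (X ω) / (e (X ω) * (1 - e (X ω)))
            + (G ω - π (X ω)) * pidot (X ω) / (π (X ω) * (1 - π (X ω)))
            + (1 - G ω) * T ω * (SY1 (X ω, S ω, Y ω) + SS1 (X ω, S ω))
            + (1 - G ω) * (1 - T ω) * (SY0 (X ω, S ω, Y ω) + SS0 (X ω, S ω))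
            + (1 - G ω) * (T ω - p (X ω)) * pdot (X ω) / (p (X ω) * (1 - p (X ω)))
            + Sf (X ω))) ∨
      (f = fun ω => G ω * (m (X ω) - τ₁) * T ω * S1s (X ω, S ω)) ∨
      (f = fun ω => G ω * (m (X ω) - τ₁) * (1 - T ω) * S0s (X ω, S ω)) ∨
      (f = fun ω => G ω * (m (X ω) - τ₁) * (T ω - e (X ω)) * edot (X ω)
          / (e (X ω) * (1 - e (X ω)))) ∨
      (f = fun ω => G ω * (m (X ω) - τ₁) * (G ω - π (X ω)) * pidot (X ω)
          / (π (X ω) * (1 - π (X ω)))) ∨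
      (f = fun ω => (m (X ω) - τ₁) * (pidot (X ω) + π (X ω) * Sf (X ω))) →
      Integrable f P) :
    ∫ ω, G ω * (m (X ω) - τ₁) *
        (G ω * T ω * S1s (X ω, S ω)
          + G ω * (1 - T ω) * S0s (X ω, S ω)
          + G ω * (T ω - e (X ω)) * edot (X ω) / (e (X ω) * (1 - e (X ω)))
          + (G ω - π (X ω)) * pidot (X ω) / (π (X ω) * (1 - π (X ω)))
          + (1 - G ω) * T ω * (SY1 (X ω, S ω, Y ω) + SS1 (X ω, S ω))
          + (1 - G ω) * (1 - T ω) * (SY0 (X ω, S ω, Y ω) + SS0 (X ω, S ω))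
          + (1 - G ω) * (T ω - p (X ω)) * pdot (X ω) / (p (X ω) * (1 - p (X ω)))
          + Sf (X ω)) ∂P
      = ∫ ω, (m (X ω) - τ₁) * (pidot (X ω) + π (X ω) * Sf (X ω)) ∂P := by
  classical
  have int1 := hint _ (Or.inl rfl)
  have int2 := hint _ (Or.inr (Or.inl rfl))
  have int3 := hint _ (Or.inr (Or.inr (Or.inl rfl)))
  have int4 := hint _ (Or.inr (Or.inr (Or.inr (Or.inl rfl))))
  have int5 := hint _ (Or.inr (Or.inr (Or.inr (Or.inr (Or.inl rfl)))))
  have int6 := hint _ (Or.inr (Or.inr (Or.inr (Or.inr (Or.inr rfl)))))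
  clear hint
  set q1 : Ω → ℝ := fun ω => G ω * (m (X ω) - τ₁) *
      (G ω * T ω * S1s (X ω, S ω)
        + G ω * (1 - T ω) * S0s (X ω, S ω)
        + G ω * (T ω - e (X ω)) * edot (X ω) / (e (X ω) * (1 - e (X ω)))
        + (G ω - π (X ω)) * pidot (X ω) / (π (X ω) * (1 - π (X ω)))
        + (1 - G ω) * T ω * (SY1 (X ω, S ω, Y ω) + SS1 (X ω, S ω))
        + (1 - G ω) * (1 - T ω) * (SY0 (X ω, S ω, Y ω) + SS0 (X ω, S ω))
        + (1 - G ω) * (T ω - p (X ω)) * pdot (X ω) / (p (X ω) * (1 - p (X ω)))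
        + Sf (X ω)) with hq1
  set q2 : Ω → ℝ := fun ω => G ω * (m (X ω) - τ₁) * T ω * S1s (X ω, S ω) with hq2
  set q3 : Ω → ℝ := fun ω => G ω * (m (X ω) - τ₁) * (1 - T ω) * S0s (X ω, S ω) with hq3
  set q4 : Ω → ℝ := fun ω => G ω * (m (X ω) - τ₁) * (T ω - e (X ω)) * edot (X ω)
      / (e (X ω) * (1 - e (X ω))) with hq4
  set q5 : Ω → ℝ := fun ω => G ω * (m (X ω) - τ₁) * (G ω - π (X ω)) * pidot (X ω)
      / (π (X ω) * (1 - π (X ω))) with hq5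
  set q6 : Ω → ℝ := fun ω => (m (X ω) - τ₁) * (pidot (X ω) + π (X ω) * Sf (X ω)) with hq6
  have hπ0 : ∀ x : α, π x ≠ 0 := fun x => ne_of_gt (hπ_bdd x).1
  have hπ1 : ∀ x : α, (1 : ℝ) - π x ≠ 0 := fun x => sub_ne_zero.2 (ne_of_gt (hπ_bdd x).2)
  have hA1meas : MeasurableSet ({ω | T ω = 1} ∩ G ⁻¹' {1}) :=
    (hT (measurableSet_singleton 1)).inter (hG (measurableSet_singleton 1))
  have hA0meas : MeasurableSet ({ω | T ω = 0} ∩ G ⁻¹' {1}) :=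
    (hT (measurableSet_singleton 0)).inter (hG (measurableSet_singleton 1))
  have hAGmeas : MeasurableSet (G ⁻¹' {1}) := hG (measurableSet_singleton 1)
  have hPA1 : P ({ω | T ω = 1} ∩ G ⁻¹' {1}) ≠ 0 := hpos 1 1 (by simp) (by simp)
  have hPA0 : P ({ω | T ω = 0} ∩ G ⁻¹' {1}) ≠ 0 := hpos 0 1 (by simp) (by simp)
  have hPAG : P (G ⁻¹' {1}) ≠ 0 := fun h =>
    hPA1 (measure_mono_null Set.inter_subset_right h)
  -- term 2 vanishes
  have hind2 : q2 = fun ω => Set.indicator ({ω | T ω = 1} ∩ G ⁻¹' {1})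
      (fun ω => (m (X ω) - τ₁) * S1s (X ω, S ω)) ω := by
    funext ω
    by_cases hω : ω ∈ ({ω | T ω = 1} ∩ G ⁻¹' {1})
    · have ht : T ω = 1 := hω.1
      have hg : G ω = 1 := hω.2
      rw [Set.indicator_of_mem hω]; simp only [hq2]; rw [ht, hg]; ring
    · rw [Set.indicator_of_notMem hω]; simp only [hq2]
      rcases hTbin ω with ht | ht
      · rw [ht]; ring
      · rcases hGbin ω with hg | hg
        · rw [hg]; ring
        · exact absurd ⟨ht, hg⟩ hω
  have hz2 : ∫ ω, q2 ω ∂P = 0 := by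
    rw [hind2, integral_indicator hA1meas, setIntegral_eq_cond_mul P hPA1]
    have hφ : Integrable (fun ω => (m (X ω) - τ₁) * S1s (X ω, S ω))
        (P[|{ω | T ω = 1} ∩ G ⁻¹' {1}]) := by
      refine integrable_cond_of_integrableOn hPA1 ?_
      rw [hind2] at int2
      exact (integrable_indicator_iff hA1meas).1 int2
    have h0 : ∫ ω, (m (X ω) - τ₁) * S1s (X ω, S ω) ∂(P[|{ω | T ω = 1} ∩ G ⁻¹' {1}]) = 0 :=
      integral_mul_eq_zero_of_setIntegral _ hX (fun ω => S1s (X ω, S ω))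
        (hS1s.comp (hX.prodMk hS)) (fun x => m x - τ₁) (hm.sub measurable_const) hφ hS1s0
    rw [h0, mul_zero]
  -- term 3 vanishes
  have hind3 : q3 = fun ω => Set.indicator ({ω | T ω = 0} ∩ G ⁻¹' {1})
      (fun ω => (m (X ω) - τ₁) * S0s (X ω, S ω)) ω := by
    funext ω
    by_cases hω : ω ∈ ({ω | T ω = 0} ∩ G ⁻¹' {1})
    · have ht : T ω = 0 := hω.1
      have hg : G ω = 1 := hω.2
      rw [Set.indicator_of_mem hω]; simp only [hq3]; rw [ht, hg]; ring
    · rw [Set.indicator_of_notMem hω]; simp only [hq3]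
      rcases hTbin ω with ht | ht
      · rcases hGbin ω with hg | hg
        · rw [hg]; ring
        · exact absurd ⟨ht, hg⟩ hω
      · rw [ht]; ring
  have hz3 : ∫ ω, q3 ω ∂P = 0 := by
    rw [hind3, integral_indicator hA0meas, setIntegral_eq_cond_mul P hPA0]
    have hφ : Integrable (fun ω => (m (X ω) - τ₁) * S0s (X ω, S ω))
        (P[|{ω | T ω = 0} ∩ G ⁻¹' {1}]) := by
      refine integrable_cond_of_integrableOn hPA0 ?_
      rw [hind3] at int3
      exact (integrable_indicator_iff hA0meas).1 int3
    have h0 : ∫ ω, (m (X ω) - τ₁) * S0s (X ω, S ω) ∂(P[|{ω | T ω = 0} ∩ G ⁻¹' {1}]) = 0 :=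
      integral_mul_eq_zero_of_setIntegral _ hX (fun ω => S0s (X ω, S ω))
        (hS0s.comp (hX.prodMk hS)) (fun x => m x - τ₁) (hm.sub measurable_const) hφ hS0s0
    rw [h0, mul_zero]
  -- term 4 vanishes
  haveI : IsProbabilityMeasure (P[|G ⁻¹' {1}]) := cond_isProbabilityMeasure hPAG
  have hTi : Integrable T (P[|G ⁻¹' {1}]) :=
    integrable_of_bound _ hT 1 (fun ω => by rcases hTbin ω with h | h <;> rw [h] <;> norm_num)
  have hei : Integrable (fun ω => e (X ω)) (P[|G ⁻¹' {1}]) :=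
    integrable_of_bound _ (he.comp hX) 1 (fun ω => by
      have h := he_bdd (X ω)
      rw [Real.norm_eq_abs, abs_le]
      constructor <;> linarith [h.1, h.2])
  have hz4set : ∀ B : Set α, MeasurableSet B →
      ∫ ω in X ⁻¹' B, (T ω - e (X ω)) ∂(P[|G ⁻¹' {1}]) = 0 := by
    intro B hB
    rw [integral_sub hTi.integrableOn hei.integrableOn, he_ver B hB, sub_self]
  have hind4 : q4 = fun ω => Set.indicator (G ⁻¹' {1})
      (fun ω => ((m (X ω) - τ₁) * edot (X ω) / (e (X ω) * (1 - e (X ω)))) * (T ω - e (X ω))) ω := by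
    funext ω
    by_cases hω : ω ∈ G ⁻¹' {1}
    · have hg : G ω = 1 := hω
      rw [Set.indicator_of_mem hω]; simp only [hq4]; rw [hg]; ring
    · have hg : G ω = 0 := by
        rcases hGbin ω with h | h
        · exact h
        · exact absurd h hω
      rw [Set.indicator_of_notMem hω]; simp only [hq4]; rw [hg]; ring
  have hz4 : ∫ ω, q4 ω ∂P = 0 := by
    rw [hind4, integral_indicator hAGmeas, setIntegral_eq_cond_mul P hPAG]
    have hφ : Integrable
        (fun ω => ((m (X ω) - τ₁) * edot (X ω) / (e (X ω) * (1 - e (X ω)))) * (T ω - e (X ω)))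
        (P[|G ⁻¹' {1}]) := by
      refine integrable_cond_of_integrableOn hPAG ?_
      rw [hind4] at int4
      exact (integrable_indicator_iff hAGmeas).1 int4
    have h0 : ∫ ω, ((m (X ω) - τ₁) * edot (X ω) / (e (X ω) * (1 - e (X ω)))) * (T ω - e (X ω))
        ∂(P[|G ⁻¹' {1}]) = 0 :=
      integral_mul_eq_zero_of_setIntegral _ hX (fun ω => T ω - e (X ω))
        (hT.sub (he.comp hX)) (fun x => (m x - τ₁) * edot x / (e x * (1 - e x)))
        (((hm.sub measurable_const).mul hedot).div (he.mul (measurable_const.sub he))) hφ hz4set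
    rw [h0, mul_zero]
  -- terms 5 + σ reduce to term 6
  have hGi : Integrable G P :=
    integrable_of_bound _ hG 1 (fun ω => by rcases hGbin ω with h | h <;> rw [h] <;> norm_num)
  have hπi : Integrable (fun ω => π (X ω)) P :=
    integrable_of_bound _ (hπ.comp hX) 1 (fun ω => by
      have h := hπ_bdd (X ω)
      rw [Real.norm_eq_abs, abs_le]
      constructor <;> linarith [h.1, h.2])
  have hz5set : ∀ B : Set α, MeasurableSet B →
      ∫ ω in X ⁻¹' B, (G ω - π (X ω)) ∂P = 0 := by
    intro B hB
    rw [integral_sub hGi.integrableOn hπi.integrableOn, hπ_ver B hB, sub_self]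
  have hσsplit : (fun ω => G ω * (m (X ω) - τ₁) * Sf (X ω))
      = fun ω => q1 ω - (q2 ω + q3 ω + q4 ω + q5 ω) := by
    funext ω
    simp only [hq1, hq2, hq3, hq4, hq5]
    rcases hGbin ω with h | h <;> rw [h] <;> ring
  have intσ : Integrable (fun ω => G ω * (m (X ω) - τ₁) * Sf (X ω)) P := by
    rw [hσsplit]
    exact int1.sub (((int2.add int3).add int4).add int5)
  have hkey : (fun ω => ((m (X ω) - τ₁) * (pidot (X ω) / π (X ω) + Sf (X ω))) * (G ω - π (X ω)))
      = fun ω => (q5 ω + G ω * (m (X ω) - τ₁) * Sf (X ω)) - q6 ω := by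
    funext ω
    have h0 := hπ0 (X ω)
    have h1 := hπ1 (X ω)
    simp only [hq5, hq6]
    rcases hGbin ω with h | h <;> rw [h] <;>
      field_simp <;> ring_nf <;> first | rfl | tauto
  have hwint : Integrable
      (fun ω => ((m (X ω) - τ₁) * (pidot (X ω) / π (X ω) + Sf (X ω))) * (G ω - π (X ω))) P := by
    rw [hkey]
    exact (int5.add intσ).sub int6
  have h50 : ∫ ω, ((m (X ω) - τ₁) * (pidot (X ω) / π (X ω) + Sf (X ω))) * (G ω - π (X ω)) ∂P = 0 :=
    integral_mul_eq_zero_of_setIntegral _ hX (fun ω => G ω - π (X ω))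
      (hG.sub (hπ.comp hX)) (fun x => (m x - τ₁) * (pidot x / π x + Sf x))
      ((hm.sub measurable_const).mul ((hpidot.div hπ).add hSf)) hwint hz5set
  have int5σ : Integrable (fun ω => q5 ω + G ω * (m (X ω) - τ₁) * Sf (X ω)) P := int5.add intσ
  have hsub : ∫ ω, ((q5 ω + G ω * (m (X ω) - τ₁) * Sf (X ω)) - q6 ω) ∂P
      = (∫ ω, (q5 ω + G ω * (m (X ω) - τ₁) * Sf (X ω)) ∂P) - ∫ ω, q6 ω ∂P :=
    integral_sub int5σ int6
  rw [hkey, hsub, sub_eq_zero] at h50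
  -- final assembly
  have hsplit : q1 = fun ω => q2 ω + q3 ω + q4 ω + (q5 ω + G ω * (m (X ω) - τ₁) * Sf (X ω)) := by
    funext ω
    simp only [hq1, hq2, hq3, hq4, hq5]
    rcases hGbin ω with h | h <;> rw [h] <;> ring
  have i23 : Integrable (fun ω => q2 ω + q3 ω) P := int2.add int3
  have i234 : Integrable (fun ω => q2 ω + q3 ω + q4 ω) P := i23.add int4
  have eA : ∫ ω, (q2 ω + q3 ω + q4 ω + (q5 ω + G ω * (m (X ω) - τ₁) * Sf (X ω))) ∂P
      = (∫ ω, (q2 ω + q3 ω + q4 ω) ∂P)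
        + ∫ ω, (q5 ω + G ω * (m (X ω) - τ₁) * Sf (X ω)) ∂P :=
    integral_add i234 int5σ
  have eB : ∫ ω, (q2 ω + q3 ω + q4 ω) ∂P = (∫ ω, (q2 ω + q3 ω) ∂P) + ∫ ω, q4 ω ∂P :=
    integral_add i23 int4
  have eC : ∫ ω, (q2 ω + q3 ω) ∂P = (∫ ω, q2 ω ∂P) + ∫ ω, q3 ω ∂P :=
    integral_add int2 int3
  calc ∫ ω, q1 ω ∂P
      = ∫ ω, (q2 ω + q3 ω + q4 ω + (q5 ω + G ω * (m (X ω) - τ₁) * Sf (X ω))) ∂P := by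
        rw [hsplit]
    _ = ∫ ω, q6 ω ∂P := by rw [eA, eB, eC, hz2, hz3, hz4, h50]; ring
end
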